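/- arXiv:2211.16557 — 3 statements merged into one kernel-verified Lean document; each statement's English description precedes it below -/
import Mathlib

section
/- Let V₁,…,Vₙ be i.i.d. standard Cauchy random variables on a probability space, let V̄ = (1/n)Σᵢ Vᵢ, and let ε > 0 and α ∈ (0, 1/2). Then P( ‖V − V̄·1ₙ‖₂ < n^{α+1/2}·ε⁻¹ ) ≤ P( Σᵢ₌₁ⁿ Vᵢ² < n^{2α+1}·(ε⁻² + 1) ) + 2·F(−n^{α/2}), where ‖V − V̄·1ₙ‖₂² = Σᵢ Vᵢ² − n·V̄² and F is the standard Cauchy cumulative distribution function; in particular the second term on the right-hand side equals P(|V̄| > n^{α/2}), because the sample mean of n i.i.d. standard Cauchy random variables is itself standard Cauchy. -/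
open MeasureTheory ProbabilityTheory Real

/-- The Cauchy distribution on `ℝ` with location `l` and scale `γ`. -/
noncomputable def cauchyMeasure (l γ : ℝ) : Measure ℝ :=
  volume.withDensity fun x => ENNReal.ofReal (γ / (π * (γ ^ 2 + (x - l) ^ 2)))

/-- The standard Cauchy cumulative distribution function `F(x) = 1/2 + (1/π)·arctan x`. -/
noncomputable def stdCauchyCDF (x : ℝ) : ℝ := 1 / 2 + (1 / π) * Real.arctan x

open Filter Topology


noncomputable def cg (a x : ℝ) : ℝ := a / (π * (a ^ 2 + x ^ 2))

lemma cg_nonneg {a : ℝ} (ha : 0 ≤ a) (x : ℝ) : 0 ≤ cg a x := by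
  unfold cg
  positivity

lemma denom_pos {a : ℝ} (ha : 0 < a) (x : ℝ) : 0 < π * (a ^ 2 + x ^ 2) := by
  have := Real.pi_pos; positivity

lemma cg_eq {a : ℝ} (ha : 0 < a) (x : ℝ) : cg a x = (π * a)⁻¹ * (1 + (x / a) ^ 2)⁻¹ := by
  unfold cg
  have := Real.pi_pos
  field_simp

lemma cg_le {a : ℝ} (ha : 0 < a) (x : ℝ) : cg a x ≤ (π * a)⁻¹ := by
  rw [cg_eq ha]
  have := Real.pi_pos
  have h1 : (1 + (x / a) ^ 2)⁻¹ ≤ 1 := by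
    rw [inv_le_one_iff₀]; right; nlinarith [sq_nonneg (x/a)]
  calc (π * a)⁻¹ * (1 + (x / a) ^ 2)⁻¹ ≤ (π * a)⁻¹ * 1 := by
        apply mul_le_mul_of_nonneg_left h1 (by positivity)
    _ = (π * a)⁻¹ := mul_one _

lemma cg_continuous {a : ℝ} (ha : 0 < a) : Continuous (cg a) := by
  apply continuous_const.div (by continuity)
  exact fun x => (denom_pos ha x).ne'

lemma cg_integrable {a : ℝ} (ha : 0 < a) : Integrable (cg a) := by
  have h := (integrable_inv_one_add_sq.comp_div ha.ne').const_mul ((π * a)⁻¹)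
  exact h.congr (Filter.Eventually.of_forall fun x => (cg_eq ha x).symm)

lemma cg_integral {a : ℝ} (ha : 0 < a) : ∫ x, cg a x = 1 := by
  have h1 : ∫ x, cg a x = ∫ x, (π * a)⁻¹ * (1 + (x / a) ^ 2)⁻¹ := by
    congr 1; funext x; exact cg_eq ha x
  rw [h1, MeasureTheory.integral_const_mul]
  rw [MeasureTheory.Measure.integral_comp_div (fun x => (1 + x ^ 2)⁻¹) a]
  rw [integral_univ_inv_one_add_sq]
  have := Real.pi_pos
  rw [abs_of_pos ha, smul_eq_mul]
  field_simp

lemma cauchyMeasure_eq (c : ℝ) :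
    _root_.cauchyMeasure 0 c = volume.withDensity (fun x => ENNReal.ofReal (cg c x)) := by
  simp [_root_.cauchyMeasure, cg]

lemma cauchyMeasure_isProb {c : ℝ} (hc : 0 < c) :
    IsProbabilityMeasure (_root_.cauchyMeasure 0 c) := by
  constructor
  rw [cauchyMeasure_eq, withDensity_apply _ MeasurableSet.univ,
    setLIntegral_univ,
    ← MeasureTheory.ofReal_integral_eq_lintegral_ofReal (cg_integrable hc)
      (Filter.Eventually.of_forall (cg_nonneg hc.le)),
    cg_integral hc, ENNReal.ofReal_one]

lemma map_add_withDensity (F G : ℝ → ENNReal) (hF : Measurable F) (hG : Measurable G) :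
    Measure.map (fun p : ℝ × ℝ => p.1 + p.2)
      ((volume.withDensity F).prod (volume.withDensity G))
    = volume.withDensity (fun z => ∫⁻ y, F (z - y) * G y) := by
  have hGsf : SFinite (volume.withDensity G) := inferInstance
  ext s hs
  have hadd : Measurable (fun p : ℝ × ℝ => p.1 + p.2) := measurable_add
  have hsum : MeasurableSet ((fun p : ℝ × ℝ => p.1 + p.2) ⁻¹' s) := hadd hs
  have hind : Measurable (s.indicator (fun _ : ℝ => (1 : ENNReal))) :=
    measurable_const.indicator hs
  rw [Measure.map_apply hadd hs, Measure.prod_apply hsum,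
    withDensity_apply _ hs]
  have h1 : ∀ x : ℝ, (volume.withDensity G) (Prod.mk x ⁻¹' ((fun p : ℝ × ℝ => p.1 + p.2) ⁻¹' s))
      = ∫⁻ y, s.indicator (fun _ => (1:ENNReal)) (x + y) * G y := by
    intro x
    have hxs : MeasurableSet ((fun y : ℝ => x + y) ⁻¹' s) := (measurable_const_add x) hs
    have : Prod.mk x ⁻¹' ((fun p : ℝ × ℝ => p.1 + p.2) ⁻¹' s) = (fun y : ℝ => x + y) ⁻¹' s := rfl
    rw [this, withDensity_apply _ hxs, ← lintegral_indicator hxs]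
    congr 1; funext y
    by_cases h : x + y ∈ s <;> simp [Set.indicator, h]
  calc ∫⁻ x, (volume.withDensity G) (Prod.mk x ⁻¹' ((fun p : ℝ × ℝ => p.1 + p.2) ⁻¹' s))
        ∂(volume.withDensity F)
      = ∫⁻ x, F x * ∫⁻ y, s.indicator (fun _ => (1:ENNReal)) (x + y) * G y := by
        simp_rw [h1]
        have hm : Measurable fun x : ℝ => ∫⁻ y, s.indicator (fun _ => (1:ENNReal)) (x + y) * G y := by
          apply Measurable.lintegral_prod_right
          exact ((hind.comp (measurable_fst.add measurable_snd)).mul (hG.comp measurable_snd))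
        rw [lintegral_withDensity_eq_lintegral_mul _ hF hm]
        rfl
    _ = ∫⁻ x, ∫⁻ y, F x * (s.indicator (fun _ => (1:ENNReal)) (x + y) * G y) := by
        congr 1; funext x
        have hm : Measurable fun y : ℝ => s.indicator (fun _ => (1:ENNReal)) (x + y) * G y :=
          (hind.comp (measurable_const_add x)).mul hG
        rw [lintegral_const_mul _ hm]
    _ = ∫⁻ y, ∫⁻ x, F x * (s.indicator (fun _ => (1:ENNReal)) (x + y) * G y) := by
        apply lintegral_lintegral_swap
        exact ((hF.comp measurable_fst).mul
          (((hind.comp (measurable_fst.add measurable_snd)).mul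
            (hG.comp measurable_snd)))).aemeasurable
    _ = ∫⁻ y, ∫⁻ z, F (z - y) * (s.indicator (fun _ => (1:ENNReal)) z * G y) := by
        congr 1; funext y
        have := lintegral_add_right_eq_self (μ := volume)
          (fun z : ℝ => F (z - y) * (s.indicator (fun _ => (1:ENNReal)) z * G y)) y
        rw [← this]
        congr 1; funext x
        simp [add_sub_cancel_right]
    _ = ∫⁻ z, ∫⁻ y, F (z - y) * (s.indicator (fun _ => (1:ENNReal)) z * G y) := by
        apply lintegral_lintegral_swap
        exact ((hF.comp (measurable_snd.sub measurable_fst)).mul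
          ((hind.comp measurable_snd).mul (hG.comp measurable_fst))).aemeasurable
    _ = ∫⁻ z, s.indicator (fun _ => (1:ENNReal)) z * ∫⁻ y, F (z - y) * G y := by
        congr 1; funext z
        have hm : Measurable fun y : ℝ => F (z - y) * G y :=
          (hF.comp (measurable_const.sub measurable_id)).mul hG
        rw [← lintegral_const_mul _ hm]
        congr 1; funext y; ring
    _ = ∫⁻ z in s, ∫⁻ y, F (z - y) * G y := by
        rw [← lintegral_indicator hs]
        congr 1; funext z
        by_cases h : z ∈ s <;> simp [Set.indicator, h]

lemma inv_tendsto_atBot_zero : Tendsto (fun y : ℝ => y⁻¹) atBot (𝓝 0) := by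
  have h := ((tendsto_inv_atTop_zero (𝕜 := ℝ)).comp tendsto_neg_atBot_atTop).neg
  rw [neg_zero] at h
  refine h.congr fun y => ?_
  simp [Function.comp, inv_neg]

lemma ratio_tendsto {a b x : ℝ} (ha : 0 < a) {l : Filter ℝ}
    (hinv : Tendsto (fun y : ℝ => y⁻¹) l (𝓝 0)) (hne : ∀ᶠ y in l, y ≠ 0) :
    Tendsto (fun y => (b ^ 2 + y ^ 2) / (a ^ 2 + (y - x) ^ 2)) l (𝓝 1) := by
  have hv : ∀ y : ℝ, a ^ 2 + (y - x) ^ 2 ≠ 0 := by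
    intro y; positivity
  have heq : (fun y => (b ^ 2 + y ^ 2) / (a ^ 2 + (y - x) ^ 2)) =ᶠ[l]
      fun y => (b ^ 2 * (y⁻¹) ^ 2 + 1) / (a ^ 2 * (y⁻¹) ^ 2 + (1 - x * y⁻¹) ^ 2) := by
    filter_upwards [hne] with y hy
    have hv2 : a ^ 2 * (y⁻¹) ^ 2 + (1 - x * y⁻¹) ^ 2 ≠ 0 := by
      have : (a ^ 2 * (y⁻¹) ^ 2 + (1 - x * y⁻¹) ^ 2) * y ^ 2 = a ^ 2 + (y - x) ^ 2 := by
        field_simp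
      intro hc
      apply hv y; rw [← this, hc, zero_mul]
    rw [div_eq_div_iff (hv y) hv2]
    field_simp
  rw [tendsto_congr' heq]
  have hnum : Tendsto (fun y : ℝ => b ^ 2 * (y⁻¹) ^ 2 + 1) l (𝓝 (b ^ 2 * 0 ^ 2 + 1)) := by
    exact (((hinv.pow 2).const_mul _).add tendsto_const_nhds)
  have hden : Tendsto (fun y : ℝ => a ^ 2 * (y⁻¹) ^ 2 + (1 - x * y⁻¹) ^ 2) l
      (𝓝 (a ^ 2 * 0 ^ 2 + (1 - x * 0) ^ 2)) := by
    exact ((hinv.pow 2).const_mul _).add ((tendsto_const_nhds.sub (hinv.const_mul x)).pow 2)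
  have := hnum.div hden (by norm_num)
  convert this using 2 <;> norm_num
lemma cg_conv_integrable {a b : ℝ} (ha : 0 < a) (hb : 0 < b) (x : ℝ) :
    Integrable (fun y => cg a (x - y) * cg b y) := by
  have hmeas : AEStronglyMeasurable (fun y => cg a (x - y) * cg b y) volume := by
    exact (((cg_continuous ha).comp (continuous_const.sub continuous_id)).mul
      (cg_continuous hb)).aestronglyMeasurable
  refine Integrable.mono ((cg_integrable hb).const_mul ((π * a)⁻¹)) hmeas ?_
  filter_upwards with y
  have h1 : 0 ≤ cg a (x - y) := cg_nonneg ha.le _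
  have h2 : 0 ≤ cg b y := cg_nonneg hb.le _
  have h3 : (0:ℝ) < (π * a)⁻¹ := by have := Real.pi_pos; positivity
  rw [Real.norm_eq_abs, Real.norm_eq_abs, abs_of_nonneg (by positivity),
    abs_of_nonneg (by positivity)]
  exact mul_le_mul_of_nonneg_right (cg_le ha _) h2

lemma cg_conv {a b x : ℝ} (ha : 0 < a) (hb : 0 < b) (hx : (a - b) ^ 2 + x ^ 2 ≠ 0) :
    ∫ y, cg a (x - y) * cg b y = cg (a + b) x := by
  have hπ := Real.pi_pos
  set D : ℝ := ((a + b) ^ 2 + x ^ 2) * ((a - b) ^ 2 + x ^ 2) with hD_def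
  have hD : 0 < D := by
    apply mul_pos (by positivity)
    rcases lt_or_eq_of_le (by positivity : (0:ℝ) ≤ (a - b) ^ 2 + x ^ 2) with h | h
    · exact h
    · exact absurd h.symm hx
  set P : ℝ := 2 * x / D with hP_def
  set Q : ℝ := (a ^ 2 + x ^ 2 - b ^ 2) / D with hQ_def
  set S : ℝ := (b ^ 2 + 3 * x ^ 2 - a ^ 2) / D with hS_def
  set K : ℝ := a * b / π ^ 2 with hK_def
  set H : ℝ → ℝ := fun y => K * (P / 2 * (Real.log (b ^ 2 + y ^ 2)
      - Real.log (a ^ 2 + (y - x) ^ 2))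
      + (Q / b * arctan (y / b) + (S - P * x) / a * arctan ((y - x) / a))) with hH_def
  have hu0 : ∀ y : ℝ, b ^ 2 + y ^ 2 ≠ 0 := fun y => by positivity
  have hv0 : ∀ y : ℝ, a ^ 2 + (y - x) ^ 2 ≠ 0 := fun y => by positivity
  -- derivative
  have hderiv : ∀ y, HasDerivAt H (cg a (x - y) * cg b y) y := by
    intro y
    have hu : HasDerivAt (fun y : ℝ => b ^ 2 + y ^ 2) (2 * y) y := by
      simpa using (hasDerivAt_pow 2 y).const_add (b ^ 2)
    have hv : HasDerivAt (fun y : ℝ => a ^ 2 + (y - x) ^ 2) (2 * (y - x)) y := by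
      simpa using (((hasDerivAt_id y).sub_const x).pow 2).const_add (a ^ 2)
    have hlog := (hu.log (hu0 y)).sub (hv.log (hv0 y))
    have ha1 := (Real.hasDerivAt_arctan (y / b)).comp y ((hasDerivAt_id y).div_const b)
    have ha2 := (Real.hasDerivAt_arctan ((y - x) / a)).comp y
      (((hasDerivAt_id y).sub_const x).div_const a)
    have Hd := ((hlog.const_mul (P / 2)).add
      ((ha1.const_mul (Q / b)).add (ha2.const_mul ((S - P * x) / a)))).const_mul K
    refine Hd.congr_deriv ?_
    unfold cg
    rw [hP_def, hQ_def, hS_def, hK_def, hD_def]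
    have h1 : (1 : ℝ) + (y / b) ^ 2 ≠ 0 := by positivity
    have h2 : (1 : ℝ) + ((y - x) / a) ^ 2 ≠ 0 := by positivity
    have hxy : a ^ 2 + (x - y) ^ 2 ≠ 0 := by positivity
    field_simp
    ring
  -- limits
  have hfunlog : (fun y : ℝ => Real.log (b ^ 2 + y ^ 2) - Real.log (a ^ 2 + (y - x) ^ 2))
      = fun y => Real.log ((b ^ 2 + y ^ 2) / (a ^ 2 + (y - x) ^ 2)) :=
    funext fun y => (Real.log_div (hu0 y) (hv0 y)).symm
  have hlog_top : Tendsto (fun y : ℝ => Real.log (b ^ 2 + y ^ 2)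
      - Real.log (a ^ 2 + (y - x) ^ 2)) atTop (𝓝 0) := by
    rw [hfunlog]
    have := (Real.continuousAt_log one_ne_zero).tendsto.comp
      (ratio_tendsto (b := b) (x := x) ha tendsto_inv_atTop_zero
        ((eventually_gt_atTop 0).mono fun y hy => hy.ne'))
    simpa [Function.comp_def] using this
  have hlog_bot : Tendsto (fun y : ℝ => Real.log (b ^ 2 + y ^ 2)
      - Real.log (a ^ 2 + (y - x) ^ 2)) atBot (𝓝 0) := by
    rw [hfunlog]
    have := (Real.continuousAt_log one_ne_zero).tendsto.comp
      (ratio_tendsto (b := b) (x := x) ha inv_tendsto_atBot_zero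
        ((eventually_lt_atBot 0).mono fun y hy => hy.ne))
    simpa [Function.comp_def] using this
  have harct1_top : Tendsto (fun y : ℝ => arctan (y / b)) atTop (𝓝 (π / 2)) :=
    (tendsto_nhds_of_tendsto_nhdsWithin Real.tendsto_arctan_atTop).comp
      (tendsto_id.atTop_div_const hb)
  have harct1_bot : Tendsto (fun y : ℝ => arctan (y / b)) atBot (𝓝 (-(π / 2))) :=
    (tendsto_nhds_of_tendsto_nhdsWithin Real.tendsto_arctan_atBot).comp
      (tendsto_id.atBot_div_const hb)
  have hsub_top : Tendsto (fun y : ℝ => (y - x) / a) atTop atTop := by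
    apply Tendsto.atTop_div_const ha
    simpa [sub_eq_add_neg] using tendsto_atTop_add_const_right atTop (-x) tendsto_id
  have hsub_bot : Tendsto (fun y : ℝ => (y - x) / a) atBot atBot := by
    apply Tendsto.atBot_div_const ha
    simpa [sub_eq_add_neg] using tendsto_atBot_add_const_right atBot (-x) tendsto_id
  have harct2_top : Tendsto (fun y : ℝ => arctan ((y - x) / a)) atTop (𝓝 (π / 2)) :=
    (tendsto_nhds_of_tendsto_nhdsWithin Real.tendsto_arctan_atTop).comp hsub_top
  have harct2_bot : Tendsto (fun y : ℝ => arctan ((y - x) / a)) atBot (𝓝 (-(π / 2))) :=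
    (tendsto_nhds_of_tendsto_nhdsWithin Real.tendsto_arctan_atBot).comp hsub_bot
  have Htop : Tendsto H atTop
      (𝓝 (K * (P / 2 * 0 + (Q / b * (π / 2) + (S - P * x) / a * (π / 2))))) := by
    exact ((((hlog_top.const_mul (P / 2))).add
      ((harct1_top.const_mul (Q / b)).add (harct2_top.const_mul ((S - P * x) / a)))).const_mul K)
  have Hbot : Tendsto H atBot
      (𝓝 (K * (P / 2 * 0 + (Q / b * (-(π / 2)) + (S - P * x) / a * (-(π / 2)))))) := by
    exact ((((hlog_bot.const_mul (P / 2))).add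
      ((harct1_bot.const_mul (Q / b)).add (harct2_bot.const_mul ((S - P * x) / a)))).const_mul K)
  rw [MeasureTheory.integral_of_hasDerivAt_of_tendsto hderiv
    (cg_conv_integrable ha hb x) Hbot Htop]
  unfold cg
  rw [hK_def, hP_def, hQ_def, hS_def, hD_def]
  have hab : (a + b) ^ 2 + x ^ 2 ≠ 0 := by positivity
  field_simp
  ring
lemma cauchy_conv {a b : ℝ} (ha : 0 < a) (hb : 0 < b) :
    Measure.map (fun p : ℝ × ℝ => p.1 + p.2)
      ((_root_.cauchyMeasure 0 a).prod (_root_.cauchyMeasure 0 b)) = _root_.cauchyMeasure 0 (a + b) := by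
  have hF : Measurable fun x => ENNReal.ofReal (cg a x) :=
    (cg_continuous ha).measurable.ennreal_ofReal
  have hG : Measurable fun x => ENNReal.ofReal (cg b x) :=
    (cg_continuous hb).measurable.ennreal_ofReal
  rw [cauchyMeasure_eq, cauchyMeasure_eq, cauchyMeasure_eq,
    map_add_withDensity _ _ hF hG]
  apply withDensity_congr_ae
  have h0 : ∀ᵐ z : ℝ, z ≠ 0 := by
    rw [ae_iff]
    have : {z : ℝ | ¬z ≠ 0} = {0} := by ext z; simp
    rw [this]
    exact Real.volume_singleton
  filter_upwards [h0] with z hz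
  have hz' : (a - b) ^ 2 + z ^ 2 ≠ 0 := by
    have h2 : 0 < z ^ 2 := lt_of_le_of_ne (sq_nonneg z) (Ne.symm (pow_ne_zero 2 hz))
    nlinarith [sq_nonneg (a - b)]
  calc ∫⁻ y, ENNReal.ofReal (cg a (z - y)) * ENNReal.ofReal (cg b y)
      = ∫⁻ y, ENNReal.ofReal (cg a (z - y) * cg b y) := by
        simp_rw [ENNReal.ofReal_mul (cg_nonneg ha.le _)]
    _ = ENNReal.ofReal (∫ y, cg a (z - y) * cg b y) := by
        rw [MeasureTheory.ofReal_integral_eq_lintegral_ofReal (cg_conv_integrable ha hb z)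
          (Filter.Eventually.of_forall fun y =>
            mul_nonneg (cg_nonneg ha.le _) (cg_nonneg hb.le _))]
    _ = ENNReal.ofReal (cg (a + b) z) := by rw [cg_conv ha hb hz']

lemma cauchy_sum_law {Ω : Type*} [MeasurableSpace Ω] (P : Measure Ω) [IsProbabilityMeasure P]
    {n : ℕ} (V : Fin n → Ω → ℝ) (hVmeas : ∀ i, Measurable (V i))
    (hVlaw : ∀ i, Measure.map (V i) P = _root_.cauchyMeasure 0 1)
    (hVindep : iIndepFun V P) :
    ∀ s : Finset (Fin n), s.Nonempty →
      Measure.map (fun ω => ∑ i ∈ s, V i ω) P = _root_.cauchyMeasure 0 (s.card) := by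
  classical
  intro s
  induction s using Finset.cons_induction with
  | empty => intro h; exact absurd rfl h.ne_empty
  | cons i s hi ih =>
    intro _
    rcases s.eq_empty_or_nonempty with rfl | hs
    · simp only [Finset.cons_empty, Finset.sum_singleton, Finset.card_singleton]
      simpa using hVlaw i
    · have hcard : (0 : ℝ) < s.card := by exact_mod_cast hs.card_pos
      have hsum_meas : Measurable fun ω => ∑ j ∈ s, V j ω :=
        Finset.measurable_sum s fun j _ => hVmeas j
      have hind : IndepFun (V i) (∑ j ∈ s, V j) P :=
        (hVindep.indepFun_finsetSum_of_notMem hVmeas hi).symm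
      have hind' : IndepFun (V i) (fun ω => ∑ j ∈ s, V j ω) P := by
        have : (∑ j ∈ s, V j) = fun ω => ∑ j ∈ s, V j ω := by
          funext ω; simp [Finset.sum_apply]
        rwa [this] at hind
      have hmap_prod : Measure.map (fun ω => (V i ω, ∑ j ∈ s, V j ω)) P
          = (Measure.map (V i) P).prod (Measure.map (fun ω => ∑ j ∈ s, V j ω) P) :=
        (ProbabilityTheory.indepFun_iff_map_prod_eq_prod_map_map
          (hVmeas i).aemeasurable hsum_meas.aemeasurable).mp hind'
      have hfun : (fun ω => ∑ j ∈ Finset.cons i s hi, V j ω)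
          = (fun p : ℝ × ℝ => p.1 + p.2) ∘ (fun ω => (V i ω, ∑ j ∈ s, V j ω)) := by
        funext ω; simp [Finset.sum_cons, Finset.sum_insert hi]
      rw [hfun, ← Measure.map_map measurable_add ((hVmeas i).prodMk hsum_meas),
        hmap_prod, hVlaw i, ih hs, cauchy_conv one_pos hcard]
      congr 1
      push_cast [Finset.card_cons]
      ring
lemma map_div_cauchy {c : ℝ} (hc : 0 < c) :
    Measure.map (fun x : ℝ => x / c) (_root_.cauchyMeasure 0 c) = _root_.cauchyMeasure 0 1 := by
  have hF : Measurable fun x => ENNReal.ofReal (cg c x) :=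
    (cg_continuous hc).measurable.ennreal_ofReal
  have hdiv : Measurable fun x : ℝ => x / c := measurable_id.div_const c
  have hmul : Measurable fun x : ℝ => c * x := measurable_const_mul c
  ext s hs
  have hA : MeasurableSet ((fun x : ℝ => x / c) ⁻¹' s) := hdiv hs
  have hvol : (ENNReal.ofReal |c|) • Measure.map (fun x : ℝ => c * x) volume = volume := by
    rw [Real.map_volume_mul_left hc.ne', smul_smul, ← ENNReal.ofReal_mul (abs_nonneg _),
      ← abs_mul, mul_inv_cancel₀ hc.ne', abs_one, ENNReal.ofReal_one, one_smul]
  rw [cauchyMeasure_eq, cauchyMeasure_eq, Measure.map_apply hdiv hs,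
    withDensity_apply _ hA, withDensity_apply _ hs]
  conv_lhs => rw [← hvol]
  rw [Measure.restrict_smul, lintegral_smul_measure,
    setLIntegral_map hA hF hmul]
  have hpre : (fun x : ℝ => c * x) ⁻¹' ((fun x : ℝ => x / c) ⁻¹' s) = s := by
    ext u; simp [mul_div_cancel_left₀ _ hc.ne']
  rw [hpre]
  have hm2 : Measurable fun x : ℝ => ENNReal.ofReal (cg c (c * x)) := hF.comp hmul
  rw [smul_eq_mul, ← lintegral_const_mul _ hm2]
  congr 1; funext u
  rw [← ENNReal.ofReal_mul (abs_nonneg _)]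
  congr 1
  rw [abs_of_pos hc]
  unfold cg
  have := Real.pi_pos
  field_simp

lemma cauchy_tail {t : ℝ} (ht : 0 ≤ t) :
    _root_.cauchyMeasure 0 1 {x : ℝ | t < |x|} = ENNReal.ofReal (2 * stdCauchyCDF (-t)) := by
  have hπ := Real.pi_pos
  have hset : {x : ℝ | t < |x|} = Set.Iio (-t) ∪ Set.Ioi t := by
    ext x
    simp only [Set.mem_setOf_eq, Set.mem_union, Set.mem_Iio, Set.mem_Ioi, lt_abs]
    constructor
    · rintro (h | h)
      · right; exact h
      · left; linarith
    · rintro (h | h)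
      · right; linarith
      · left; exact h
  have hdisj : Disjoint (Set.Iio (-t)) (Set.Ioi t) := by
    rw [Set.disjoint_left]
    intro x hx hx'
    simp only [Set.mem_Iio] at hx
    simp only [Set.mem_Ioi] at hx'
    linarith
  have hint : ∀ u : Set ℝ, MeasurableSet u → IntegrableOn (cg 1) u volume :=
    fun u hu => (cg_integrable one_pos).integrableOn
  have hval : ∀ u : Set ℝ, MeasurableSet u →
      _root_.cauchyMeasure 0 1 u = ENNReal.ofReal (∫ x in u, cg 1 x) := by
    intro u hu
    rw [cauchyMeasure_eq, withDensity_apply _ hu,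
      MeasureTheory.ofReal_integral_eq_lintegral_ofReal (hint u hu)
        (Filter.Eventually.of_forall fun y => cg_nonneg one_pos.le _)]
  have hcg1 : ∀ x : ℝ, cg 1 x = π⁻¹ * (1 + x ^ 2)⁻¹ := by
    intro x; unfold cg; rw [one_pow, ← mul_inv, one_div]
  have hIio : ∫ x in Set.Iio (-t), cg 1 x = π⁻¹ * (arctan (-t) + π / 2) := by
    simp_rw [hcg1]
    rw [MeasureTheory.integral_const_mul, ← MeasureTheory.integral_Iic_eq_integral_Iio,
      integral_Iic_inv_one_add_sq]
  have hIoi : ∫ x in Set.Ioi t, cg 1 x = π⁻¹ * (π / 2 - arctan t) := by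
    simp_rw [hcg1]
    rw [MeasureTheory.integral_const_mul, integral_Ioi_inv_one_add_sq]
  have harc1 : -(π / 2) < arctan (-t) := Real.neg_pi_div_two_lt_arctan _
  have harc2 : arctan t < π / 2 := Real.arctan_lt_pi_div_two _
  rw [hset, measure_union hdisj measurableSet_Ioi, hval _ measurableSet_Iio,
    hval _ measurableSet_Ioi, hIio, hIoi,
    ← ENNReal.ofReal_add (mul_nonneg (by positivity) (by linarith)) (mul_nonneg (by positivity) (by linarith))]
  congr 1
  unfold stdCauchyCDF
  rw [Real.arctan_neg]
  field_simp
  ring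

/-- **Equation (7) of the RECaST paper.** For `V₁,…,Vₙ` i.i.d. standard Cauchy, `ε > 0` and
`α ∈ (0, 1/2)`,
`P(‖V − V̄·1ₙ‖₂ < n^{α+1/2}ε⁻¹) ≤ P(ΣᵢVᵢ² < n^{2α+1}(ε⁻² + 1)) + 2F(−n^{α/2})`,
where `F` is the standard Cauchy CDF. -/
theorem cauchy_norm_lower_tail_bound
    {Ω : Type*} [MeasurableSpace Ω] (P : Measure Ω) [IsProbabilityMeasure P]
    (n : ℕ) (V : Fin n → Ω → ℝ)
    (hVmeas : ∀ i, Measurable (V i))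
    (hVlaw : ∀ i, Measure.map (V i) P = _root_.cauchyMeasure 0 1)
    (hVindep : iIndepFun V P)
    (ε α : ℝ) (hε : 0 < ε) (hα : α ∈ Set.Ioo (0 : ℝ) (1 / 2)) :
    (P {ω | Real.sqrt (∑ i, (V i ω - (∑ j, V j ω) / n) ^ 2)
        < (n : ℝ) ^ (α + 1 / 2 : ℝ) * ε⁻¹}).toReal
      ≤ (P {ω | (∑ i, (V i ω) ^ 2) < (n : ℝ) ^ (2 * α + 1 : ℝ) * (ε⁻¹ ^ 2 + 1)}).toReal
        + 2 * stdCauchyCDF (-(n : ℝ) ^ (α / 2 : ℝ)) := by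
  obtain ⟨hα0, hα2⟩ := hα
  have hπ := Real.pi_pos
  rcases Nat.eq_zero_or_pos n with rfl | hn
  · -- degenerate case n = 0
    have h1 : ((0 : ℕ) : ℝ) ^ (α + 1 / 2 : ℝ) = 0 := by
      rw [Nat.cast_zero, Real.zero_rpow (by linarith)]
    have h2 : ((0 : ℕ) : ℝ) ^ (α / 2 : ℝ) = 0 := by
      rw [Nat.cast_zero, Real.zero_rpow (by linarith)]
    have hset : {ω : Ω | Real.sqrt (∑ i : Fin 0, (V i ω - (∑ j, V j ω) / (0:ℕ)) ^ 2)
        < ((0:ℕ) : ℝ) ^ (α + 1 / 2 : ℝ) * ε⁻¹} = ∅ := by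
      ext ω
      simp only [Set.mem_setOf_eq, Finset.univ_eq_empty, Finset.sum_empty, Real.sqrt_zero,
        Set.mem_empty_iff_false, iff_false, not_lt]
      rw [h1, zero_mul]
    rw [hset, measure_empty]
    have h3 : (0:ENNReal).toReal = 0 := rfl
    rw [h3, h2]
    have h4 : stdCauchyCDF (-0) = 1 / 2 := by
      unfold stdCauchyCDF; rw [neg_zero, Real.arctan_zero, mul_zero, add_zero]
    rw [h4]
    have := ENNReal.toReal_nonneg
      (a := P {ω | (∑ i, (V i ω) ^ 2) < ((0:ℕ) : ℝ) ^ (2 * α + 1 : ℝ) * (ε⁻¹ ^ 2 + 1)})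
    linarith
  · -- main case
    set N : ℝ := (n : ℝ) with hN_def
    have hN : 0 < N := Nat.cast_pos.mpr hn
    have hN1 : 1 ≤ N := Nat.one_le_cast.mpr hn
    set t : ℝ := N ^ (α / 2 : ℝ) with ht_def
    have ht0 : 0 ≤ t := Real.rpow_nonneg hN.le _
    set m : Ω → ℝ := fun ω => (∑ j, V j ω) / N with hm_def
    have hsum_meas : Measurable fun ω => ∑ j, V j ω :=
      Finset.measurable_sum Finset.univ fun j _ => hVmeas j
    have hm_meas : Measurable m := hsum_meas.div_const N
    -- law of the mean
    haveI : Nonempty (Fin n) := Fin.pos_iff_nonempty.mp hn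
    have hlaw_sum : Measure.map (fun ω => ∑ j, V j ω) P = _root_.cauchyMeasure 0 N := by
      have := cauchy_sum_law P V hVmeas hVlaw hVindep Finset.univ Finset.univ_nonempty
      rwa [Finset.card_univ, Fintype.card_fin] at this
    have hlaw_m : Measure.map m P = _root_.cauchyMeasure 0 1 := by
      have hg : Measurable fun x : ℝ => x / N := by exact measurable_id.div_const N
      have hcomp : m = (fun x : ℝ => x / N) ∘ (fun ω => ∑ j, V j ω) := rfl
      rw [hcomp, ← Measure.map_map hg hsum_meas, hlaw_sum, map_div_cauchy hN]
    -- tail probability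
    have htail_set : MeasurableSet {x : ℝ | t < |x|} :=
      measurableSet_lt measurable_const continuous_abs.measurable
    have hPC : P {ω | t < |m ω|} = ENNReal.ofReal (2 * stdCauchyCDF (-t)) := by
      have : {ω | t < |m ω|} = m ⁻¹' {x : ℝ | t < |x|} := rfl
      rw [this, ← Measure.map_apply hm_meas htail_set, hlaw_m, cauchy_tail ht0]
    -- the inclusion
    set A := {ω : Ω | Real.sqrt (∑ i, (V i ω - (∑ j, V j ω) / N) ^ 2)
        < N ^ (α + 1 / 2 : ℝ) * ε⁻¹} with hA_def
    set B := {ω : Ω | (∑ i, (V i ω) ^ 2) < N ^ (2 * α + 1 : ℝ) * (ε⁻¹ ^ 2 + 1)} with hB_def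
    set C := {ω : Ω | t < |m ω|} with hC_def
    have hsub : A ⊆ B ∪ C := by
      intro ω hω
      by_cases hC : ω ∈ C
      · exact Or.inr hC
      · left
        simp only [hC_def, Set.mem_setOf_eq, not_lt] at hC
        simp only [hA_def, Set.mem_setOf_eq] at hω
        simp only [hB_def, Set.mem_setOf_eq]
        set M : ℝ := N ^ (α + 1 / 2 : ℝ) * ε⁻¹ with hM_def
        have hM : 0 < M := mul_pos (Real.rpow_pos_of_pos hN _) (inv_pos.mpr hε)
        have hsq_nonneg : 0 ≤ ∑ i, (V i ω - m ω) ^ 2 :=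
          Finset.sum_nonneg fun i _ => sq_nonneg _
        have hs2 : ∑ i, (V i ω - m ω) ^ 2 < M ^ 2 := by
          have h := Real.sq_sqrt hsq_nonneg
          have hlt : Real.sqrt (∑ i, (V i ω - m ω) ^ 2) < M := hω
          calc ∑ i, (V i ω - m ω) ^ 2
              = Real.sqrt (∑ i, (V i ω - m ω) ^ 2) ^ 2 := h.symm
            _ < M ^ 2 := by
                apply pow_lt_pow_left₀ hlt (Real.sqrt_nonneg _) (by norm_num)
        have hsum_eq : ∑ j, V j ω = N * m ω := by
          rw [hm_def]; field_simp
        have hid : ∑ i, (V i ω - m ω) ^ 2 = (∑ i, (V i ω) ^ 2) - N * m ω ^ 2 := by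
          have hexp : ∀ i : Fin n, (V i ω - m ω) ^ 2
              = (V i ω) ^ 2 - 2 * m ω * V i ω + m ω ^ 2 := fun i => by ring
          rw [Finset.sum_congr rfl fun i _ => hexp i, Finset.sum_add_distrib,
            Finset.sum_sub_distrib, ← Finset.mul_sum, Finset.sum_const, Finset.card_univ,
            Fintype.card_fin, nsmul_eq_mul, hsum_eq]
          ring
        have hm2 : m ω ^ 2 ≤ t ^ 2 := by
          rw [← sq_abs (m ω)]
          exact pow_le_pow_left₀ (abs_nonneg _) hC 2
        -- rpow arithmetic
        have hM2 : M ^ 2 = N ^ (2 * α + 1 : ℝ) * ε⁻¹ ^ 2 := by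
          rw [hM_def, mul_pow, ← Real.rpow_natCast (N ^ (α + 1 / 2 : ℝ)) 2,
            ← Real.rpow_mul hN.le]
          have he : ((α + 1 / 2) * ((2:ℕ):ℝ)) = 2 * α + 1 := by push_cast; ring
          rw [he]
        have ht2 : t ^ 2 = N ^ (α : ℝ) := by
          rw [ht_def, ← Real.rpow_natCast (N ^ (α / 2 : ℝ)) 2, ← Real.rpow_mul hN.le]
          have he : ((α / 2) * ((2:ℕ):ℝ)) = α := by push_cast; ring
          rw [he]
        have hNt : N * N ^ (α : ℝ) = N ^ (1 + α : ℝ) := by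
          rw [Real.rpow_add hN, Real.rpow_one]
        have hexp_le : N ^ (1 + α : ℝ) ≤ N ^ (2 * α + 1 : ℝ) :=
          Real.rpow_le_rpow_of_exponent_le hN1 (by linarith)
        have hNm : N * m ω ^ 2 ≤ N ^ (2 * α + 1 : ℝ) := by
          calc N * m ω ^ 2 ≤ N * t ^ 2 := by
                exact mul_le_mul_of_nonneg_left hm2 hN.le
            _ = N ^ (1 + α : ℝ) := by rw [ht2, hNt]
            _ ≤ N ^ (2 * α + 1 : ℝ) := hexp_le
        have : (∑ i, (V i ω) ^ 2) = (∑ i, (V i ω - m ω) ^ 2) + N * m ω ^ 2 := by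
          rw [hid]; ring
        rw [this]
        calc (∑ i, (V i ω - m ω) ^ 2) + N * m ω ^ 2
            < M ^ 2 + N ^ (2 * α + 1 : ℝ) := by
              exact add_lt_add_of_lt_of_le hs2 hNm
          _ = N ^ (2 * α + 1 : ℝ) * (ε⁻¹ ^ 2 + 1) := by rw [hM2]; ring
    -- put it together
    have hstd_nonneg : 0 ≤ 2 * stdCauchyCDF (-t) := by
      unfold stdCauchyCDF
      have h1 := Real.neg_pi_div_two_lt_arctan (-t)
      have h2 : (1 / π) * (-(π / 2)) ≤ (1 / π) * arctan (-t) :=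
        mul_le_mul_of_nonneg_left h1.le (by positivity)
      have h3 : (1 / π) * (-(π / 2)) = -(1/2) := by field_simp
      linarith
    have hPBC : P A ≤ P B + P C := le_trans (measure_mono hsub) (measure_union_le B C)
    have hfin : P B + P C ≠ ⊤ :=
      ENNReal.add_ne_top.mpr ⟨measure_ne_top P B, measure_ne_top P C⟩
    have h1 : (P A).toReal ≤ (P B + P C).toReal := ENNReal.toReal_mono hfin hPBC
    rw [ENNReal.toReal_add (measure_ne_top P B) (measure_ne_top P C), hPC,
      ENNReal.toReal_ofReal hstd_nonneg] at h1
    exact h1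
end

section
/- On a probability space, let Y₁,…,Yₙ be i.i.d. N(μ_T, σ²) random variables with σ > 0, let V₁,…,Vₙ be i.i.d. standard Cauchy random variables independent of the Yᵢ's, let c ≠ 0 be a fixed real number, and define γ̂ₙ = [Σᵢ(Vᵢ − V̄)(Yᵢ − Ȳ)]/[c·Σᵢ(Vᵢ − V̄)²]. Then for every ε > 0 and every α ∈ (0, 1/2), P( |γ̂ₙ| > n^{−α/2}·ε ) ≤ exp( −n^{1+α} · (1/2) · ( c²/(2σ²) − n^{−α} + n^{−1−α} ) ) + P( ‖V − V̄·1ₙ‖₂ < n^{α+1/2}·ε⁻¹ ). The first term arises from the Chernoff bound applied with parameter t = 1/4 to S = ‖Y − Ȳ·1ₙ‖₂²/σ², which has a chi-squared distribution with n − 1 degrees of freedom. -/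
open MeasureTheory ProbabilityTheory Real
open scoped ENNReal NNReal

/-- The Cauchy distribution on `ℝ` with location `l` and scale `γ`. -/
noncomputable def cauchyMeasure' (l γ : ℝ) : Measure ℝ :=
  volume.withDensity fun x => ENNReal.ofReal (γ / (π * (γ ^ 2 + (x - l) ^ 2)))

/-- The sample mean `(1/n)Σᵢ Wᵢ(ω)` of a finite family of random variables. -/
noncomputable def sampleMean {Ω : Type*} (n : ℕ) (W : Fin n → Ω → ℝ) (ω : Ω) : ℝ :=
  (∑ i, W i ω) / n

/-- The estimator `γ̂ = Σᵢ(Vᵢ−V̄)(Yᵢ−Ȳ) / (c·Σᵢ(Vᵢ−V̄)²)`. -/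
noncomputable def gammaHat {Ω : Type*} (n : ℕ) (c : ℝ) (V Y : Fin n → Ω → ℝ) (ω : Ω) : ℝ :=
  (∑ i, (V i ω - sampleMean n V ω) * (Y i ω - sampleMean n Y ω)) /
    (c * ∑ i, (V i ω - sampleMean n V ω) ^ 2)


lemma integrable_gauss_linear {p : ℝ} (hp : 0 < p) (q r : ℝ) :
    Integrable (fun x : ℝ => rexp (-p * x ^ 2 + q * x + r)) := by
  have h : ∀ x : ℝ, -p * x ^ 2 + q * x + r
      = -p * (x - q / (2 * p)) ^ 2 + (r + q ^ 2 / (4 * p)) := by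
    intro x; field_simp; ring
  simp_rw [h, Real.exp_add]
  exact (((integrable_exp_neg_mul_sq hp).comp_sub_right (q / (2 * p))).mul_const _)

lemma integral_gauss_linear {p : ℝ} (hp : 0 < p) (q r : ℝ) :
    ∫ x : ℝ, rexp (-p * x ^ 2 + q * x + r)
      = rexp (r + q ^ 2 / (4 * p)) * Real.sqrt (π / p) := by
  have h : ∀ x : ℝ, -p * x ^ 2 + q * x + r
      = -p * (x - q / (2 * p)) ^ 2 + (r + q ^ 2 / (4 * p)) := by
    intro x; field_simp; ring
  simp_rw [h, Real.exp_add]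
  rw [MeasureTheory.integral_mul_const,
    integral_sub_right_eq_self (fun x => rexp (-p * x ^ 2)) (q / (2 * p)),
    integral_gaussian, mul_comm]

open ProbabilityTheory in
lemma gauss_step (μT σ : ℝ) (hσ : 0 < σ) (γ s A : ℝ) (hγ : 0 < γ) :
    ∫⁻ x : ℝ, ENNReal.ofReal (rexp ((x - μT) ^ 2 / (4 * σ ^ 2) - γ * ((x - μT) + s) ^ 2 + A))
        ∂(gaussianReal μT ⟨σ ^ 2, sq_nonneg σ⟩)
      = ENNReal.ofReal (Real.sqrt 2 / Real.sqrt (1 + 4 * σ ^ 2 * γ)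
          * rexp (A - γ / (1 + 4 * σ ^ 2 * γ) * s ^ 2)) := by
  have hσ0 : σ ≠ 0 := hσ.ne'
  have hσ2 : (0:ℝ) < σ ^ 2 := by positivity
  set v : ℝ≥0 := ⟨σ ^ 2, sq_nonneg σ⟩ with hvdef
  have hv : v ≠ 0 := by
    rw [← NNReal.coe_ne_zero]; exact hσ2.ne'
  set p : ℝ := 1 / (4 * σ ^ 2) + γ with hpdef
  have hp : 0 < p := by positivity
  have h1p : (0:ℝ) < 1 + 4 * σ ^ 2 * γ := by positivity
  have hmeasg : Measurable fun x : ℝ =>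
      ENNReal.ofReal (rexp ((x - μT) ^ 2 / (4 * σ ^ 2) - γ * ((x - μT) + s) ^ 2 + A)) := by
    fun_prop
  rw [gaussianReal_of_var_ne_zero _ hv,
    lintegral_withDensity_eq_lintegral_mul _ (measurable_gaussianPDF _ _) hmeasg]
  have heq : ∀ x : ℝ,
      (gaussianPDF μT v * fun x =>
        ENNReal.ofReal (rexp ((x - μT) ^ 2 / (4 * σ ^ 2) - γ * ((x - μT) + s) ^ 2 + A))) x
      = ENNReal.ofReal ((√(2 * π * σ ^ 2))⁻¹ *
          rexp (-p * (x - μT) ^ 2 + (-2 * γ * s) * (x - μT) + (A - γ * s ^ 2))) := by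
    intro x
    simp only [Pi.mul_apply, gaussianPDF, NNReal.coe_mk]
    rw [← ENNReal.ofReal_mul (gaussianPDFReal_nonneg _ _ _)]
    congr 1
    unfold gaussianPDFReal
    rw [show (v : ℝ) = σ ^ 2 from rfl]
    rw [mul_assoc, ← Real.exp_add]
    congr 1
    rw [hpdef]
    field_simp
    ring
  rw [lintegral_congr heq]
  have hint : Integrable (fun x : ℝ => (√(2 * π * σ ^ 2))⁻¹ *
      rexp (-p * (x - μT) ^ 2 + (-2 * γ * s) * (x - μT) + (A - γ * s ^ 2))) :=
    (((integrable_gauss_linear hp (-2 * γ * s) (A - γ * s ^ 2)).comp_sub_right μT).const_mul _)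
  rw [← ofReal_integral_eq_lintegral_ofReal hint
    (Filter.Eventually.of_forall fun x => by positivity)]
  congr 1
  rw [MeasureTheory.integral_const_mul,
    integral_sub_right_eq_self
      (fun x => rexp (-p * x ^ 2 + (-2 * γ * s) * x + (A - γ * s ^ 2))) μT,
    integral_gauss_linear hp]
  have hexp : (A - γ * s ^ 2) + (-2 * γ * s) ^ 2 / (4 * p)
      = A - γ / (1 + 4 * σ ^ 2 * γ) * s ^ 2 := by
    rw [hpdef]; field_simp; ring
  have hconst : (√(2 * π * σ ^ 2))⁻¹ * √(π / p) = √2 / √(1 + 4 * σ ^ 2 * γ) := by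
    rw [← Real.sqrt_inv, ← Real.sqrt_mul (by positivity), ← Real.sqrt_div (by norm_num)]
    congr 1
    rw [hpdef]
    field_simp
    ring
  rw [hexp, mul_comm (rexp _) (√(π / p)), ← mul_assoc, hconst]

open ProbabilityTheory in
lemma key_lintegral (μT σ : ℝ) (hσ : 0 < σ) :
    ∀ (m : ℕ) (γ : ℝ), 0 < γ →
    ∫⁻ x : Fin m → ℝ, ENNReal.ofReal (rexp ((∑ i, (x i - μT) ^ 2) / (4 * σ ^ 2)
        - γ * (∑ i, (x i - μT)) ^ 2))
      ∂(Measure.pi fun _ => gaussianReal μT ⟨σ ^ 2, sq_nonneg σ⟩)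
    = ENNReal.ofReal (Real.sqrt 2 ^ m / Real.sqrt (1 + 4 * m * σ ^ 2 * γ)) := by
  intro m
  induction m with
  | zero =>
    intro γ hγ
    simp
  | succ m ih =>
    intro γ hγ
    have hσ2 : (0:ℝ) < σ ^ 2 := by positivity
    set ν : Measure ℝ := gaussianReal μT ⟨σ ^ 2, sq_nonneg σ⟩ with hν
    have hD : (0:ℝ) < 1 + 4 * σ ^ 2 * γ := by positivity
    have hγ' : 0 < γ / (1 + 4 * σ ^ 2 * γ) := by positivity
    set f : (Fin (m+1) → ℝ) → ℝ≥0∞ := fun x =>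
      ENNReal.ofReal (rexp ((∑ i, (x i - μT) ^ 2) / (4 * σ ^ 2)
        - γ * (∑ i, (x i - μT)) ^ 2)) with hf
    have hfm : Measurable f := by fun_prop
    haveI : IsProbabilityMeasure ν := by
      rw [hν]; set v : ℝ≥0 := ⟨σ ^ 2, sq_nonneg σ⟩; infer_instance
    have hmp := (measurePreserving_piFinSuccAbove
      (fun _ : Fin (m+1) => ν) 0).symm (MeasurableEquiv.piFinSuccAbove (fun _ => ℝ) 0)
    rw [← hmp.lintegral_comp hfm]
    rw [lintegral_prod_symm
      (fun z => f ((MeasurableEquiv.piFinSuccAbove (fun _ => ℝ) 0).symm z))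
      ((hfm.comp (MeasurableEquiv.piFinSuccAbove
        (fun _ => ℝ) 0).symm.measurable).aemeasurable)]
    have hinner : ∀ y : Fin m → ℝ,
        (∫⁻ a, f ((MeasurableEquiv.piFinSuccAbove (fun _ => ℝ) 0).symm (a, y)) ∂ν)
        = ENNReal.ofReal (Real.sqrt 2 / Real.sqrt (1 + 4 * σ ^ 2 * γ))
          * ENNReal.ofReal (rexp ((∑ i, (y i - μT) ^ 2) / (4 * σ ^ 2)
            - γ / (1 + 4 * σ ^ 2 * γ) * (∑ i, (y i - μT)) ^ 2)) := by
      intro y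
      rw [← ENNReal.ofReal_mul (by positivity)]
      rw [← gauss_step μT σ hσ γ (∑ j, (y j - μT)) ((∑ j, (y j - μT) ^ 2) / (4 * σ ^ 2)) hγ]
      refine lintegral_congr fun a => ?_
      simp only [hf, MeasurableEquiv.piFinSuccAbove_symm_apply, Fin.insertNthEquiv_zero,
        Fin.consEquiv_apply, Fin.sum_univ_succ, Fin.cons_zero, Fin.cons_succ]
      congr 2
      ring
    simp_rw [hinner]
    rw [lintegral_const_mul' _ _ ENNReal.ofReal_ne_top, ih _ hγ',
      ← ENNReal.ofReal_mul (by positivity)]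
    congr 1
    have hX : (0:ℝ) < 1 + 4 * ((m:ℝ) + 1) * σ ^ 2 * γ := by positivity
    have h1 : 1 + 4 * (m:ℝ) * σ ^ 2 * (γ / (1 + 4 * σ ^ 2 * γ))
        = (1 + 4 * ((m:ℝ) + 1) * σ ^ 2 * γ) / (1 + 4 * σ ^ 2 * γ) := by
      field_simp
      ring
    rw [h1, Real.sqrt_div hX.le]
    have hsD : Real.sqrt (1 + 4 * σ ^ 2 * γ) ≠ 0 := by
      positivity
    have hsX : Real.sqrt (1 + 4 * ((m:ℝ) + 1) * σ ^ 2 * γ) ≠ 0 := by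
      positivity
    push_cast
    field_simp
    ring

open ProbabilityTheory in
lemma law_pi {Ω : Type*} [MeasurableSpace Ω] (P : Measure Ω) [IsProbabilityMeasure P]
    (n : ℕ) (Y : Fin n → Ω → ℝ) (hYmeas : ∀ i, Measurable (Y i))
    (hYindep : iIndepFun Y P) :
    Measure.map (fun ω (i : Fin n) => Y i ω) P
      = Measure.pi (fun i => Measure.map (Y i) P) := by
  haveI : ∀ i, IsProbabilityMeasure (Measure.map (Y i) P) :=
    fun i => Measure.isProbabilityMeasure_map (hYmeas i).aemeasurable
  refine (Measure.pi_eq (μ := fun i => Measure.map (Y i) P) fun s hs => ?_).symm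
  rw [Measure.map_apply (measurable_pi_lambda _ hYmeas) (MeasurableSet.univ_pi hs)]
  have hpre : (fun ω (i : Fin n) => Y i ω) ⁻¹' (Set.univ.pi s)
      = ⋂ i ∈ Finset.univ, Y i ⁻¹' s i := by
    ext ω; simp [Set.mem_pi]
  rw [hpre, hYindep.measure_inter_preimage_eq_mul Finset.univ (fun i _ => hs i)]
  exact Finset.prod_congr rfl fun i _ => (Measure.map_apply (hYmeas i) (hs i)).symm

lemma sum_sq_dev (n : ℕ) (hn : 0 < n) (μ : ℝ) (x : Fin n → ℝ) :
    ∑ i, (x i - (∑ j, x j) / n) ^ 2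
      = ∑ i, (x i - μ) ^ 2 - (∑ i, (x i - μ)) ^ 2 / n := by
  have hn' : ((n:ℝ)) ≠ 0 := Nat.cast_ne_zero.mpr hn.ne'
  have key : ∀ c : ℝ, ∑ i, (x i - c) ^ 2
      = ∑ i, (x i) ^ 2 - (2 * c) * (∑ i, x i) + n * c ^ 2 := by
    intro c
    rw [Finset.sum_congr rfl (fun i _ => by ring :
      ∀ i ∈ Finset.univ, (x i - c) ^ 2 = ((x i) ^ 2 - (2 * c) * x i + c ^ 2))]
    rw [Finset.sum_add_distrib, Finset.sum_sub_distrib, ← Finset.mul_sum,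
      Finset.sum_const, Finset.card_univ, Fintype.card_fin, nsmul_eq_mul]
  have hsub : ∑ i, (x i - μ) = (∑ i, x i) - n * μ := by
    rw [Finset.sum_sub_distrib, Finset.sum_const, Finset.card_univ, Fintype.card_fin,
      nsmul_eq_mul]
  rw [key, key μ, hsub]
  field_simp
  ring

open ProbabilityTheory in
lemma chernoff_bound {Ω : Type*} [MeasurableSpace Ω] (P : Measure Ω) [IsProbabilityMeasure P]
    (n : ℕ) (hn : 0 < n) (μT σ : ℝ) (hσ : 0 < σ) (Y : Fin n → Ω → ℝ)
    (hYmeas : ∀ i, Measurable (Y i))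
    (hYlaw : ∀ i, Measure.map (Y i) P = gaussianReal μT ⟨σ ^ 2, sq_nonneg σ⟩)
    (hYindep : iIndepFun Y P) (a : ℝ) :
    P {ω | a ≤ ∑ i, (Y i ω - sampleMean n Y ω) ^ 2}
      ≤ ENNReal.ofReal (Real.sqrt 2 ^ (n - 1) * rexp (-(a / (4 * σ ^ 2)))) := by
  have hσ2 : (0:ℝ) < σ ^ 2 := by positivity
  have hn' : ((n:ℝ)) ≠ 0 := Nat.cast_ne_zero.mpr hn.ne'
  have hγ0 : (0:ℝ) < 1 / (4 * σ ^ 2 * n) := by positivity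
  set g : Ω → ℝ≥0∞ := fun ω =>
    ENNReal.ofReal (rexp ((∑ i, (Y i ω - sampleMean n Y ω) ^ 2) / (4 * σ ^ 2))) with hg
  have hgmeas : Measurable g := by
    unfold g; unfold sampleMean; fun_prop
  set ee : ℝ≥0∞ := ENNReal.ofReal (rexp (a / (4 * σ ^ 2))) with hee
  have hee0 : ee ≠ 0 := by
    simp [hee, Real.exp_pos]
  have heet : ee ≠ ∞ := ENNReal.ofReal_ne_top
  have hsub : {ω | a ≤ ∑ i, (Y i ω - sampleMean n Y ω) ^ 2} ⊆ {ω | ee ≤ g ω} := by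
    intro ω hω
    exact ENNReal.ofReal_le_ofReal (Real.exp_le_exp.mpr (by gcongr; exact hω))
  have hlint : ∫⁻ ω, g ω ∂P = ENNReal.ofReal (Real.sqrt 2 ^ (n - 1)) := by
    have hvec : Measurable (fun ω (i : Fin n) => Y i ω) := measurable_pi_lambda _ hYmeas
    have hF : Measurable (fun x : Fin n → ℝ =>
        ENNReal.ofReal (rexp ((∑ i, (x i - (∑ j, x j) / n) ^ 2) / (4 * σ ^ 2)))) := by
      fun_prop
    have hmap : ∫⁻ ω, g ω ∂P = ∫⁻ x : Fin n → ℝ,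
        ENNReal.ofReal (rexp ((∑ i, (x i - (∑ j, x j) / n) ^ 2) / (4 * σ ^ 2)))
        ∂(Measure.map (fun ω i => Y i ω) P) := (lintegral_map hF hvec).symm
    rw [hmap, law_pi P n Y hYmeas hYindep]
    rw [show (fun i : Fin n => Measure.map (Y i) P)
        = fun _ => gaussianReal μT ⟨σ ^ 2, sq_nonneg σ⟩ from funext fun i => hYlaw i]
    have hptwise : ∀ x : Fin n → ℝ,
        ENNReal.ofReal (rexp ((∑ i, (x i - (∑ j, x j) / n) ^ 2) / (4 * σ ^ 2)))
        = ENNReal.ofReal (rexp ((∑ i, (x i - μT) ^ 2) / (4 * σ ^ 2)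
            - (1 / (4 * σ ^ 2 * n)) * (∑ i, (x i - μT)) ^ 2)) := by
      intro x
      congr 2
      rw [sum_sq_dev n hn μT x]
      field_simp
    rw [lintegral_congr hptwise, key_lintegral μT σ hσ n _ hγ0]
    congr 1
    rw [show 1 + 4 * (n:ℝ) * σ ^ 2 * (1 / (4 * σ ^ 2 * n)) = 2 by field_simp; ring]
    have hs2 : Real.sqrt 2 ≠ 0 := by positivity
    conv_lhs => rw [show n = (n - 1) + 1 from (Nat.succ_pred_eq_of_pos hn).symm]
    rw [pow_succ, mul_div_assoc, div_self hs2, mul_one]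
  calc P {ω | a ≤ ∑ i, (Y i ω - sampleMean n Y ω) ^ 2}
      ≤ P {ω | ee ≤ g ω} := measure_mono hsub
    _ ≤ ee⁻¹ * ∫⁻ ω, g ω ∂P := by
        have h := mul_meas_ge_le_lintegral₀ (μ := P) hgmeas.aemeasurable ee
        calc P {ω | ee ≤ g ω} = ee⁻¹ * (ee * P {ω | ee ≤ g ω}) := by
              rw [← mul_assoc, ENNReal.inv_mul_cancel hee0 heet, one_mul]
          _ ≤ ee⁻¹ * ∫⁻ ω, g ω ∂P := by gcongr
    _ = ENNReal.ofReal (Real.sqrt 2 ^ (n - 1) * rexp (-(a / (4 * σ ^ 2)))) := by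
        rw [hlint, hee, ← ENNReal.ofReal_inv_of_pos (Real.exp_pos _), ← Real.exp_neg,
          ← ENNReal.ofReal_mul (Real.exp_nonneg _), mul_comm]

/-- **Chernoff-type tail bound on `γ̂` (RECaST, proof of Lemma 3).** For `Y₁,…,Yₙ` i.i.d.
`N(μ_T, σ²)` independent of `V₁,…,Vₙ` i.i.d. standard Cauchy, for any `ε > 0` and
`α ∈ (0, 1/2)`,
`P(|γ̂ₙ| > n^{−α/2}ε) ≤ exp(−n^{1+α}·(1/2)·(c²/(2σ²) − n^{−α} + n^{−1−α}))
  + P(‖V − V̄·1ₙ‖₂ < n^{α+1/2}ε⁻¹)`. -/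
theorem gammaHat_tail_bound
    {Ω : Type*} [MeasurableSpace Ω] (P : Measure Ω) [IsProbabilityMeasure P]
    (n : ℕ) (μT σ c : ℝ) (hσ : 0 < σ) (hc : c ≠ 0)
    (Y V : Fin n → Ω → ℝ)
    (hYmeas : ∀ i, Measurable (Y i)) (hVmeas : ∀ i, Measurable (V i))
    (hYlaw : ∀ i, Measure.map (Y i) P = gaussianReal μT ⟨σ ^ 2, sq_nonneg σ⟩)
    (hVlaw : ∀ i, Measure.map (V i) P = cauchyMeasure' 0 1)
    (hYindep : iIndepFun Y P)
    (hVindep : iIndepFun V P)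
    (hYV : IndepFun (fun ω => fun i => Y i ω) (fun ω => fun i => V i ω) P)
    (ε α : ℝ) (hε : 0 < ε) (hα : α ∈ Set.Ioo (0 : ℝ) (1 / 2)) :
    (P {ω | |gammaHat n c V Y ω| > (n : ℝ) ^ (-(α / 2) : ℝ) * ε}).toReal
      ≤ Real.exp (-(n : ℝ) ^ (1 + α : ℝ) * (1 / 2) *
            (c ^ 2 / (2 * σ ^ 2) - (n : ℝ) ^ (-α : ℝ) + (n : ℝ) ^ (-(1 + α) : ℝ)))
        + (P {ω | Real.sqrt (∑ i, (V i ω - sampleMean n V ω) ^ 2)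
            < (n : ℝ) ^ (α + 1 / 2 : ℝ) * ε⁻¹}).toReal := by
  obtain ⟨hα0, hα12⟩ := hα
  rcases Nat.eq_zero_or_pos n with hn | hn
  · subst hn
    have hempty : {ω : Ω | |gammaHat 0 c V Y ω| > (0 : ℝ) ^ (-(α / 2) : ℝ) * ε} = ∅ := by
      ext ω
      simp only [Set.mem_setOf_eq, Set.mem_empty_iff_false, iff_false, not_lt]
      have hgh : gammaHat 0 c V Y ω = 0 := by simp [gammaHat]
      rw [hgh, Real.zero_rpow (ne_of_lt (by linarith : -(α / 2) < 0))]
      simp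
    simp only [Nat.cast_zero]
    rw [hempty, measure_empty]
    simp only [ENNReal.toReal_zero]
    positivity
  · -- main case
    set N : ℝ := (n : ℝ) with hN
    have hNpos : (0:ℝ) < N := by rw [hN]; exact_mod_cast hn
    have hσ2 : (0:ℝ) < σ ^ 2 := by positivity
    set a : ℝ := c ^ 2 * N ^ ((1:ℝ) + α) with ha
    set B1 : Set Ω := {ω | a ≤ ∑ i, (Y i ω - sampleMean n Y ω) ^ 2} with hB1
    set B2 : Set Ω := {ω | Real.sqrt (∑ i, (V i ω - sampleMean n V ω) ^ 2)
        < N ^ (α + 1 / 2 : ℝ) * ε⁻¹} with hB2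
    have hincl : {ω | |gammaHat n c V Y ω| > N ^ (-(α / 2) : ℝ) * ε} ⊆ B1 ∪ B2 := by
      intro ω hω
      simp only [Set.mem_setOf_eq, gt_iff_lt] at hω
      by_cases hQcase : Real.sqrt (∑ i, (V i ω - sampleMean n V ω) ^ 2)
          < N ^ (α + 1 / 2 : ℝ) * ε⁻¹
      · exact Or.inr hQcase
      push_neg at hQcase
      left
      set Q : ℝ := ∑ i, (V i ω - sampleMean n V ω) ^ 2 with hQ
      set R : ℝ := ∑ i, (Y i ω - sampleMean n Y ω) ^ 2 with hR
      set Nm : ℝ := ∑ i, (V i ω - sampleMean n V ω) * (Y i ω - sampleMean n Y ω) with hNm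
      have hτ : (0:ℝ) < N ^ (-(α / 2) : ℝ) * ε := by positivity
      have hgne : gammaHat n c V Y ω ≠ 0 := by
        intro h
        rw [h, abs_zero] at hω
        linarith
      have hcQ : c * Q ≠ 0 := by
        intro h
        apply hgne
        show Nm / (c * Q) = 0
        rw [h, div_zero]
      have hQ0 : Q ≠ 0 := fun h => hcQ (by rw [h, mul_zero])
      have hQnn : (0:ℝ) ≤ Q := Finset.sum_nonneg fun i _ => sq_nonneg _
      have hQpos : (0:ℝ) < Q := lt_of_le_of_ne hQnn (Ne.symm hQ0)
      have hRnn : (0:ℝ) ≤ R := Finset.sum_nonneg fun i _ => sq_nonneg _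
      have hsQ : (0:ℝ) < Real.sqrt Q := Real.sqrt_pos.mpr hQpos
      have hCS : |Nm| ≤ Real.sqrt Q * Real.sqrt R := by
        rw [← Real.sqrt_mul hQnn]
        exact Real.abs_le_sqrt (Finset.sum_mul_sq_le_sq_mul_sq Finset.univ _ _)
      have habs : |gammaHat n c V Y ω| = |Nm| / (|c| * Q) := by
        show |Nm / (c * Q)| = _
        rw [abs_div, abs_mul, abs_of_pos hQpos]
      rw [habs] at hω
      have hclt : (N ^ (-(α / 2) : ℝ) * ε) * (|c| * Q) < |Nm| :=
        (lt_div_iff₀ (by positivity)).mp hω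
      have step : (N ^ (-(α / 2) : ℝ) * ε) * |c| * Real.sqrt Q < Real.sqrt R := by
        have h2 : ((N ^ (-(α / 2) : ℝ) * ε) * |c| * Real.sqrt Q) * Real.sqrt Q
            < Real.sqrt R * Real.sqrt Q := by
          calc ((N ^ (-(α / 2) : ℝ) * ε) * |c| * Real.sqrt Q) * Real.sqrt Q
              = (N ^ (-(α / 2) : ℝ) * ε) * (|c| * (Real.sqrt Q * Real.sqrt Q)) := by ring
            _ = (N ^ (-(α / 2) : ℝ) * ε) * (|c| * Q) := by rw [Real.mul_self_sqrt hQnn]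
            _ < |Nm| := hclt
            _ ≤ Real.sqrt R * Real.sqrt Q := by rw [mul_comm]; exact hCS
        exact lt_of_mul_lt_mul_right h2 hsQ.le
      have hNN : N ^ (-(α / 2) : ℝ) * N ^ (α + 1/2 : ℝ) = N ^ (((1:ℝ) + α)/2) := by
        rw [← Real.rpow_add hNpos]
        congr 1
        ring
      have hstep2 : |c| * N ^ (((1:ℝ) + α)/2)
          ≤ (N ^ (-(α / 2) : ℝ) * ε) * |c| * Real.sqrt Q := by
        calc |c| * N ^ (((1:ℝ) + α)/2)
            = (N ^ (-(α / 2) : ℝ) * ε) * |c| * (N ^ (α + 1/2 : ℝ) * ε⁻¹) := by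
              rw [show (N ^ (-(α / 2) : ℝ) * ε) * |c| * (N ^ (α + 1/2 : ℝ) * ε⁻¹)
                  = |c| * (N ^ (-(α / 2) : ℝ) * N ^ (α + 1/2 : ℝ)) * (ε * ε⁻¹) by ring,
                hNN, mul_inv_cancel₀ hε.ne', mul_one]
          _ ≤ (N ^ (-(α / 2) : ℝ) * ε) * |c| * Real.sqrt Q := by
              have hnn : (0:ℝ) ≤ (N ^ (-(α / 2) : ℝ) * ε) * |c| := by positivity
              exact mul_le_mul_of_nonneg_left hQcase hnn
      have hfinal : |c| * N ^ (((1:ℝ) + α)/2) < Real.sqrt R := lt_of_le_of_lt hstep2 step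
      show a ≤ R
      have hsq : (|c| * N ^ (((1:ℝ) + α)/2)) ^ 2 ≤ (Real.sqrt R) ^ 2 :=
        pow_le_pow_left₀ (by positivity) hfinal.le 2
      rw [Real.sq_sqrt hRnn] at hsq
      refine le_trans (le_of_eq ?_) hsq
      rw [mul_pow, sq_abs, ha]
      congr 1
      rw [← Real.rpow_natCast (N ^ (((1:ℝ) + α)/2)) 2, ← Real.rpow_mul hNpos.le]
      congr 1
      push_cast
      ring
    have hchern := chernoff_bound P n hn μT σ hσ Y hYmeas hYlaw hYindep a
    have hPA : P {ω | |gammaHat n c V Y ω| > N ^ (-(α / 2) : ℝ) * ε}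
        ≤ ENNReal.ofReal (Real.sqrt 2 ^ (n - 1) * rexp (-(a / (4 * σ ^ 2)))) + P B2 :=
      le_trans (measure_mono hincl)
        (le_trans (measure_union_le _ _) (add_le_add hchern le_rfl))
    set T1 : ℝ := Real.sqrt 2 ^ (n - 1) * rexp (-(a / (4 * σ ^ 2))) with hT1
    have hT1nn : 0 ≤ T1 := by positivity
    have hT1le : T1 ≤ rexp (-N ^ ((1:ℝ) + α) * (1 / 2) *
        (c ^ 2 / (2 * σ ^ 2) - N ^ (-α : ℝ) + N ^ (-((1:ℝ) + α) : ℝ))) := by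
      have hsqrt2 : Real.sqrt 2 ≤ rexp (1/2) := by
        rw [show rexp ((1:ℝ)/2) = Real.sqrt (rexp 1) from Real.exp_half 1]
        exact Real.sqrt_le_sqrt (by linarith [Real.add_one_le_exp (1:ℝ)])
      have hpow : Real.sqrt 2 ^ (n - 1) ≤ rexp ((N - 1) / 2) := by
        calc Real.sqrt 2 ^ (n - 1) ≤ rexp (1/2) ^ (n - 1) :=
              pow_le_pow_left₀ (Real.sqrt_nonneg 2) hsqrt2 (n - 1)
          _ = rexp (((n - 1 : ℕ) : ℝ) * (1/2)) := (Real.exp_nat_mul _ _).symm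
          _ = rexp ((N - 1) / 2) := by
              rw [Nat.cast_sub hn]
              push_cast
              rw [← hN]
              ring
      have h1 : N ^ ((1:ℝ) + α) * N ^ (-α : ℝ) = N := by
        rw [← Real.rpow_add hNpos, show (1:ℝ) + α + -α = 1 by ring, Real.rpow_one]
      have h2 : N ^ ((1:ℝ) + α) * N ^ (-((1:ℝ) + α) : ℝ) = 1 := by
        rw [← Real.rpow_add hNpos, show (1:ℝ) + α + -((1:ℝ) + α) = 0 by ring, Real.rpow_zero]
      calc T1 ≤ rexp ((N - 1) / 2) * rexp (-(a / (4 * σ ^ 2))) :=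
            mul_le_mul_of_nonneg_right hpow (Real.exp_nonneg _)
        _ = rexp ((N - 1) / 2 + -(a / (4 * σ ^ 2))) := (Real.exp_add _ _).symm
        _ = rexp (-N ^ ((1:ℝ) + α) * (1 / 2) *
            (c ^ 2 / (2 * σ ^ 2) - N ^ (-α : ℝ) + N ^ (-((1:ℝ) + α) : ℝ))) := by
            congr 1
            rw [ha]
            linear_combination (-(1:ℝ)/2) * h1 + (1/2 : ℝ) * h2
    calc (P {ω | |gammaHat n c V Y ω| > N ^ (-(α / 2) : ℝ) * ε}).toReal
        ≤ (ENNReal.ofReal T1 + P B2).toReal :=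
          ENNReal.toReal_mono
            (ENNReal.add_ne_top.mpr ⟨ENNReal.ofReal_ne_top, measure_ne_top _ _⟩) hPA
      _ = T1 + (P B2).toReal := by
          rw [ENNReal.toReal_add ENNReal.ofReal_ne_top (measure_ne_top _ _),
            ENNReal.toReal_ofReal hT1nn]
      _ ≤ rexp (-N ^ ((1:ℝ) + α) * (1 / 2) *
            (c ^ 2 / (2 * σ ^ 2) - N ^ (-α : ℝ) + N ^ (-((1:ℝ) + α) : ℝ)))
          + (P B2).toReal := add_le_add hT1le le_rfl
end

section
/- On a probability space, for each n let Y_{n,1},…,Y_{n,n} be i.i.d. N(μ_T, σ²) random variables with σ > 0, let V_{n,1},…,V_{n,n} be i.i.d. standard Cauchy random variables independent of the Y's, let c ≠ 0 be a fixed real number, and define γ̂ₙ = [Σᵢ(V_{n,i} − V̄ₙ)(Y_{n,i} − Ȳₙ)]/[c·Σᵢ(V_{n,i} − V̄ₙ)²]. Then for every α ∈ (0, 1/2), the sequence n^{α/2}·γ̂ₙ converges to 0 in probability as n → ∞; i.e., for every ε > 0, P(|γ̂ₙ| > n^{−α/2}·ε) → 0 as n → ∞. -/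
open MeasureTheory ProbabilityTheory Real Filter
open scoped ENNReal NNReal

/- ### Auxiliary lemmas -/

lemma gauss_sq_integrable (μ : ℝ) (v : ℝ≥0) (hv : v ≠ 0) :
    Integrable (fun x : ℝ => gaussianPDFReal μ v x * (x - μ)^2) := by
  have hv' : 0 < (v:ℝ) := by positivity
  have hb : 0 < (1 : ℝ) / (2 * v) := by positivity
  have h1 : Integrable (fun y : ℝ => y^2 * Real.exp (-(1/(2*(v:ℝ))) * y^2)) := by
    have := integrable_rpow_mul_exp_neg_mul_sq hb (s := 2) (by norm_num)
    simpa [Real.rpow_two] using this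
  have h2 := ((h1.comp_sub_right μ).const_mul ((Real.sqrt (2 * π * v))⁻¹))
  refine h2.congr (Filter.Eventually.of_forall fun x => ?_)
  simp only [Function.comp, gaussianPDFReal]
  rw [show -(1/(2*(v:ℝ))) * (x-μ)^2 = -(x-μ)^2/(2*v) by ring]
  ring

lemma gauss_sq_moment (μ : ℝ) (v : ℝ≥0) (hv : v ≠ 0) :
    ∃ G : ℝ, 0 ≤ G ∧
      ∫⁻ x, ENNReal.ofReal ((x - μ)^2) ∂(gaussianReal μ v) = ENNReal.ofReal G := by
  refine ⟨∫ x, gaussianPDFReal μ v x * (x - μ)^2, integral_nonneg fun x =>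
    mul_nonneg (gaussianPDFReal_nonneg μ v x) (sq_nonneg _), ?_⟩
  rw [gaussianReal_of_var_ne_zero μ hv,
    lintegral_withDensity_eq_lintegral_mul _ (measurable_gaussianPDF μ v)
      (by fun_prop)]
  rw [ofReal_integral_eq_lintegral_ofReal (gauss_sq_integrable μ v hv)
    (Filter.Eventually.of_forall fun x => mul_nonneg (gaussianPDFReal_nonneg μ v x) (sq_nonneg _))]
  apply lintegral_congr fun x => ?_
  simp [gaussianPDF, Pi.mul_apply, ← ENNReal.ofReal_mul (gaussianPDFReal_nonneg μ v x)]

lemma cauchy_Ioi_lb {M : ℝ} (hM : 1 ≤ M) :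
    ENNReal.ofReal (1/(5*π*M)) ≤ _root_.cauchyMeasure 0 1 (Set.Ioi M) := by
  have hM0 : 0 < M := lt_of_lt_of_le one_pos hM
  rw [_root_.cauchyMeasure, withDensity_apply _ measurableSet_Ioi]
  have h1 : ∫⁻ x in Set.Ioc M (2*M), ENNReal.ofReal (1/(5*π*M^2)) ∂volume
      ≤ ∫⁻ x in Set.Ioc M (2*M), ENNReal.ofReal (1 / (π * (1 ^ 2 + (x - 0) ^ 2))) ∂volume := by
    refine setLIntegral_mono (by fun_prop) fun x hx => ?_
    apply ENNReal.ofReal_le_ofReal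
    apply one_div_le_one_div_of_le (by positivity)
    have hx1 : M < x := hx.1
    have hx2 : x ≤ 2*M := hx.2
    have : x^2 ≤ 4*M^2 := by nlinarith
    have h1M : 1 ≤ M^2 := by nlinarith
    nlinarith [pi_pos]
  calc ENNReal.ofReal (1/(5*π*M))
      = ENNReal.ofReal (1/(5*π*M^2)) * volume (Set.Ioc M (2*M)) := by
        rw [Real.volume_Ioc, ← ENNReal.ofReal_mul (by positivity)]
        congr 1
        field_simp
        ring
    _ = ∫⁻ x in Set.Ioc M (2*M), ENNReal.ofReal (1/(5*π*M^2)) ∂volume := by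
        rw [setLIntegral_const]
    _ ≤ ∫⁻ x in Set.Ioc M (2*M), ENNReal.ofReal (1 / (π * (1 ^ 2 + (x - 0) ^ 2))) ∂volume := h1
    _ ≤ ∫⁻ x in Set.Ioi M, ENNReal.ofReal (1 / (π * (1 ^ 2 + (x - 0) ^ 2))) ∂volume := by
        apply lintegral_mono_set
        exact Set.Ioc_subset_Ioi_self

lemma cauchy_Iio_lb : ENNReal.ofReal (1/(2*π)) ≤ _root_.cauchyMeasure 0 1 (Set.Iio 0) := by
  rw [_root_.cauchyMeasure, withDensity_apply _ measurableSet_Iio]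
  calc ENNReal.ofReal (1/(2*π))
      = ENNReal.ofReal (1/(2*π)) * volume (Set.Ioo (-1) (0:ℝ)) := by
        rw [Real.volume_Ioo]
        norm_num
    _ = ∫⁻ x in Set.Ioo (-1) (0:ℝ), ENNReal.ofReal (1/(2*π)) ∂volume := by
        rw [setLIntegral_const]
    _ ≤ ∫⁻ x in Set.Ioo (-1) (0:ℝ), ENNReal.ofReal (1 / (π * (1 ^ 2 + (x - 0) ^ 2))) ∂volume := by
        refine setLIntegral_mono (by fun_prop) fun x hx => ?_
        apply ENNReal.ofReal_le_ofReal
        apply one_div_le_one_div_of_le (by positivity)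
        have hx1 : -1 < x := hx.1
        have hx2 : x < 0 := hx.2
        have : x^2 ≤ 1 := by nlinarith
        nlinarith [pi_pos]
    _ ≤ ∫⁻ x in Set.Iio (0:ℝ), ENNReal.ofReal (1 / (π * (1 ^ 2 + (x - 0) ^ 2))) ∂volume := by
        apply lintegral_mono_set
        intro x hx
        exact hx.2

lemma sum_sq_mean_le {n : ℕ} (hn : 0 < n) (y : Fin n → ℝ) (m : ℝ) :
    ∑ i, (y i - (∑ i, y i)/n)^2 ≤ ∑ i, (y i - m)^2 := by
  have hn' : (0:ℝ) < n := Nat.cast_pos.mpr hn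
  set S := ∑ i, y i with hS
  have expand : ∀ t : ℝ, ∑ i, (y i - t)^2 = (∑ i, (y i)^2) - 2*t*S + n*t^2 := by
    intro t
    have : ∀ i : Fin n, (y i - t)^2 = (y i)^2 - 2*t*(y i) + t^2 := fun i => by ring
    rw [Finset.sum_congr rfl fun i _ => this i]
    rw [Finset.sum_add_distrib, Finset.sum_sub_distrib, ← Finset.mul_sum,
      Finset.sum_const, Finset.card_univ, Fintype.card_fin, nsmul_eq_mul]
  rw [expand, expand]
  have key : (∑ i, (y i)^2) - 2*m*S + n*m^2 -
      ((∑ i, (y i)^2) - 2*(S/n)*S + n*(S/n)^2) = (S - n*m)^2/n := by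
    field_simp
    ring
  nlinarith [sq_nonneg (S - n*m), div_nonneg (sq_nonneg (S - (n:ℝ)*m)) hn'.le]

lemma gamma_incl {n : ℕ} (hn : 0 < n) {c t M a μT : ℝ} (hc : c ≠ 0) (ht : 0 < t) (hM : 0 < M)
    (ha : a = c^2*t^2*M^2/2) (v y : Fin n → ℝ)
    (hA : ∑ i, (y i - μT)^2 < a) (i j : Fin n) (hi : M < v i) (hj : v j < 0) :
    |(∑ k, (v k - (∑ k, v k)/n) * (y k - (∑ k, y k)/n)) /
      (c * ∑ k, (v k - (∑ k, v k)/n)^2)| ≤ t := by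
  set vb := (∑ k, v k)/(n:ℝ) with hvb
  set yb := (∑ k, y k)/(n:ℝ) with hyb
  set SVV := ∑ k, (v k - vb)^2 with hSVV
  set SVY := ∑ k, (v k - vb) * (y k - yb) with hSVY
  set SYY := ∑ k, (y k - yb)^2 with hSYYdef
  have hij : i ≠ j := by rintro rfl; linarith
  have hpair : (v i - vb)^2 + (v j - vb)^2 ≤ SVV := by
    have hsub : ({i, j} : Finset (Fin n)) ⊆ Finset.univ := Finset.subset_univ _
    have := Finset.sum_le_sum_of_subset_of_nonneg hsub
      (fun k _ _ => sq_nonneg (v k - vb))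
    rwa [Finset.sum_pair hij] at this
  have hSVVpos : M^2/2 < SVV := by
    have h2 : (v i - v j)^2/2 ≤ (v i - vb)^2 + (v j - vb)^2 := by
      nlinarith [sq_nonneg (v i + v j - 2*vb)]
    have h3 : M^2 < (v i - v j)^2 := by nlinarith
    linarith
  have hSVV0 : 0 < SVV := lt_of_lt_of_le (by positivity) hSVVpos.le
  have hSYY : SYY < a := lt_of_le_of_lt (by
    simpa [hSYYdef, hyb] using sum_sq_mean_le hn y μT) hA
  have hSYY0 : 0 ≤ SYY := Finset.sum_nonneg fun k _ => sq_nonneg _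
  have hCS : SVY^2 ≤ SVV * SYY := by
    simpa [hSVY, hSVV, hSYYdef, mul_pow] using
      Finset.sum_mul_sq_le_sq_mul_sq Finset.univ (fun k => v k - vb) (fun k => y k - yb)
  have hkey : SVY^2 ≤ (|c| * t * SVV)^2 := by
    have h1 : SVV * SYY ≤ SVV * a := by nlinarith
    have h2 : SVV * a ≤ c^2 * t^2 * SVV^2 := by
      rw [ha]
      nlinarith [mul_le_mul_of_nonneg_left hSVVpos.le
        (show (0:ℝ) ≤ c^2*t^2*SVV by positivity)]
    calc SVY^2 ≤ SVV * SYY := hCS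
      _ ≤ SVV * a := h1
      _ ≤ c^2*t^2*SVV^2 := h2
      _ = (|c| * t * SVV)^2 := by rw [mul_pow, mul_pow, sq_abs]
  have habs : |SVY| ≤ |c| * t * SVV := by
    nlinarith [abs_nonneg SVY, sq_abs SVY,
      (show (0:ℝ) ≤ |c| * t * SVV by positivity)]
  rw [abs_div, abs_mul, abs_of_pos hSVV0, div_le_iff₀ (mul_pos (abs_pos.mpr hc) hSVV0)]
  calc |SVY| ≤ |c| * t * SVV := habs
    _ = t * ( |c| * SVV) := by ring

lemma markov_bound {Ω} [MeasurableSpace Ω] (P : Measure Ω) [IsProbabilityMeasure P]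
    {n : ℕ} (Y : Fin n → Ω → ℝ) (hYmeas : ∀ i, Measurable (Y i)) (μT : ℝ) {G a : ℝ}
    (hG : 0 ≤ G) (ha : 0 < a)
    (hmom : ∀ i, ∫⁻ ω, ENNReal.ofReal ((Y i ω - μT)^2) ∂P = ENNReal.ofReal G) :
    (P {ω | a ≤ ∑ i, (Y i ω - μT)^2}).toReal ≤ n * G / a := by
  have hset : {ω | a ≤ ∑ i, (Y i ω - μT)^2}
      = {ω | ENNReal.ofReal a ≤ ENNReal.ofReal (∑ i, (Y i ω - μT)^2)} := by
    ext ω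
    simp only [Set.mem_setOf_eq]
    rw [ENNReal.ofReal_le_ofReal_iff (Finset.sum_nonneg fun i _ => sq_nonneg _)]
  have hmeas : Measurable fun ω => ENNReal.ofReal (∑ i, (Y i ω - μT)^2) := by
    apply Measurable.ennreal_ofReal
    exact Finset.measurable_sum _ fun i _ => ((hYmeas i).sub measurable_const).pow_const 2
  have hle := meas_ge_le_lintegral_div (μ := P) hmeas.aemeasurable
    (ε := ENNReal.ofReal a) (by simp [ENNReal.ofReal_eq_zero, not_le, ha]) ENNReal.ofReal_ne_top
  have hlint : ∫⁻ ω, ENNReal.ofReal (∑ i, (Y i ω - μT)^2) ∂P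
      = n * ENNReal.ofReal G := by
    have : ∀ ω, ENNReal.ofReal (∑ i, (Y i ω - μT)^2)
        = ∑ i, ENNReal.ofReal ((Y i ω - μT)^2) := fun ω =>
      ENNReal.ofReal_sum_of_nonneg fun i _ => sq_nonneg _
    simp_rw [this]
    rw [lintegral_finset_sum (f := fun i ω => ENNReal.ofReal ((Y i ω - μT)^2)) _ fun i _ =>
      (((hYmeas i).sub measurable_const).pow_const 2).ennreal_ofReal]
    simp [hmom, Finset.sum_const]
  rw [hset]
  calc (P {ω | ENNReal.ofReal a ≤ ENNReal.ofReal (∑ i, (Y i ω - μT)^2)}).toReal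
      ≤ ((n * ENNReal.ofReal G) / ENNReal.ofReal a).toReal := by
        apply ENNReal.toReal_mono
        · exact (ENNReal.div_lt_top (by simp [ENNReal.mul_ne_top, ENNReal.ofReal_ne_top])
            (by simp [ENNReal.ofReal_eq_zero, not_le, ha])).ne
        · rw [← hlint]; exact hle
    _ = n * G / a := by
        rw [ENNReal.toReal_div, ENNReal.toReal_mul, ENNReal.toReal_ofReal hG,
          ENNReal.toReal_ofReal ha.le]
        simp

lemma prod_bound {Ω} [MeasurableSpace Ω] (P : Measure Ω) [IsProbabilityMeasure P]
    {n : ℕ} (V : Fin n → Ω → ℝ) (hmeas : ∀ i, Measurable (V i))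
    (hindep : iIndepFun V P)
    (s : Set ℝ) (hs : MeasurableSet s) {r : ℝ} (hr0 : 0 ≤ r)
    (htail : ∀ i, ENNReal.ofReal r ≤ P ((V i ⁻¹' s)ᶜ)) :
    (P (⋂ i, V i ⁻¹' s)).toReal ≤ (1 - r)^n := by
  rw [hindep.meas_iInter fun i => ⟨s, hs, rfl⟩, ENNReal.toReal_prod]
  have hfac : ∀ i : Fin n, (P (V i ⁻¹' s)).toReal ≤ 1 - r := by
    intro i
    have h1 : P (V i ⁻¹' s) = 1 - P ((V i ⁻¹' s)ᶜ) := by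
      rw [prob_compl_eq_one_sub ((hmeas i) hs),
        ENNReal.sub_sub_cancel ENNReal.one_ne_top prob_le_one]
    have h2 : r ≤ (P ((V i ⁻¹' s)ᶜ)).toReal := by
      have := (ENNReal.toReal_le_toReal ENNReal.ofReal_ne_top (measure_ne_top P _)).mpr (htail i)
      rwa [ENNReal.toReal_ofReal hr0] at this
    rw [h1, ENNReal.toReal_sub_of_le prob_le_one ENNReal.one_ne_top, ENNReal.toReal_one]
    linarith
  calc ∏ i : Fin n, (P (V i ⁻¹' s)).toReal ≤ ∏ _i : Fin n, (1 - r) :=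
        Finset.prod_le_prod (fun i _ => ENNReal.toReal_nonneg) (fun i _ => hfac i)
    _ = (1 - r)^n := by simp

lemma tendsto1 (K : ℝ) {β : ℝ} (hβ : β < 0) :
    Tendsto (fun n : ℕ => K * (n:ℝ) ^ β) atTop (nhds 0) := by
  have h := (tendsto_rpow_neg_atTop (by linarith : 0 < -β)).comp
    tendsto_natCast_atTop_atTop (α := ℕ)
  simp only [Function.comp, neg_neg] at h
  simpa using h.const_mul K

lemma tendsto2 : Tendsto (fun n : ℕ => Real.exp (-((n:ℝ)/(5*π*(n:ℝ)^((7:ℝ)/8)))))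
    atTop (nhds 0) := by
  apply Real.tendsto_exp_atBot.comp
  rw [tendsto_neg_atBot_iff]
  have h : Tendsto (fun n : ℕ => (1/(5*π)) * (n:ℝ)^((1:ℝ)/8)) atTop atTop := by
    apply Tendsto.const_mul_atTop (by positivity)
    exact (tendsto_rpow_atTop (by norm_num)).comp tendsto_natCast_atTop_atTop
  apply h.congr'
  filter_upwards [eventually_ge_atTop 1] with n hn
  have hN : (0:ℝ) < (n:ℝ) := by exact_mod_cast hn
  have h78 : (0:ℝ) < (n:ℝ)^((7:ℝ)/8) := rpow_pos_of_pos hN _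
  have hkey : (n:ℝ)^((7:ℝ)/8) * (n:ℝ)^((1:ℝ)/8) = (n:ℝ) := by
    rw [← Real.rpow_add hN]
    norm_num
  have hrw : (n:ℝ) / (5*π*(n:ℝ)^((7:ℝ)/8))
      = ((n:ℝ)^((7:ℝ)/8) * (n:ℝ)^((1:ℝ)/8)) / (5*π*(n:ℝ)^((7:ℝ)/8)) := by rw [hkey]
  show (1/(5*π)) * (n:ℝ)^((1:ℝ)/8) = (n:ℝ) / (5*π*(n:ℝ)^((7:ℝ)/8))
  rw [hrw]
  field_simp

lemma tendsto3 : Tendsto (fun n : ℕ => (1 - 1/(2*π))^n) atTop (nhds 0) := by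
  apply tendsto_pow_atTop_nhds_zero_of_lt_one
  · have := Real.pi_gt_three
    rw [sub_nonneg, div_le_one (by linarith)]
    linarith
  · have h3 := Real.pi_gt_three
    have : 0 < 1/(2*π) := by positivity
    linarith

/-- **RECaST, proof of Lemma 3:** `n^{α/2}·γ̂ₙ → 0` in probability; i.e., for every `ε > 0`,
`P(|γ̂ₙ| > n^{−α/2}ε) → 0` as `n → ∞`. -/
theorem gammaHat_scaled_tendsto_zero_in_probability
    {Ω : Type*} [MeasurableSpace Ω] (P : Measure Ω) [IsProbabilityMeasure P]
    (μT σ c : ℝ) (hσ : 0 < σ) (hc : c ≠ 0)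
    (Y V : (n : ℕ) → Fin n → Ω → ℝ)
    (hYmeas : ∀ n i, Measurable (Y n i)) (hVmeas : ∀ n i, Measurable (V n i))
    (hYlaw : ∀ n i, Measure.map (Y n i) P = gaussianReal μT ⟨σ ^ 2, sq_nonneg σ⟩)
    (hVlaw : ∀ n i, Measure.map (V n i) P = _root_.cauchyMeasure 0 1)
    (hYindep : ∀ n, iIndepFun (Y n) P)
    (hVindep : ∀ n, iIndepFun (V n) P)
    (hYV : ∀ n, IndepFun (fun ω => fun i => Y n i ω) (fun ω => fun i => V n i ω) P)
    (α : ℝ) (hα : α ∈ Set.Ioo (0 : ℝ) (1 / 2)) :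
    ∀ ε > (0 : ℝ),
      Tendsto (fun n : ℕ =>
          (P {ω | |gammaHat n c (V n) (Y n) ω| > (n : ℝ) ^ (-(α / 2) : ℝ) * ε}).toReal)
        atTop (nhds 0) := by
  intro ε hε
  obtain ⟨hα0, hα12⟩ := hα
  have hc2 : (0:ℝ) < c^2 := lt_of_le_of_ne (sq_nonneg c) (Ne.symm (pow_ne_zero 2 hc))
  -- Gaussian second moment
  have hv : (⟨σ^2, sq_nonneg σ⟩ : ℝ≥0) ≠ 0 := by
    intro h
    have h2 : σ^2 = (0:ℝ) := congrArg NNReal.toReal h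
    exact (pow_pos hσ 2).ne' h2
  obtain ⟨G, hG, hGmom⟩ := gauss_sq_moment μT _ hv
  have hmomP : ∀ n i, ∫⁻ ω, ENNReal.ofReal ((Y n i ω - μT)^2) ∂P = ENNReal.ofReal G := by
    intro n i
    have hg : Measurable fun x : ℝ => ENNReal.ofReal ((x - μT)^2) :=
      ((measurable_id.sub measurable_const).pow_const 2).ennreal_ofReal
    rw [← lintegral_map hg (hYmeas n i), hYlaw n i, hGmom]
  -- bounding sequences
  have hβ : α - 3/4 < 0 := by linarith
  have hlim : Tendsto (fun n : ℕ => (2*G/(c^2*ε^2)) * (n:ℝ)^(α - 3/4 : ℝ)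
      + (Real.exp (-((n:ℝ)/(5*π*(n:ℝ)^((7:ℝ)/8)))) + (1 - 1/(2*π))^n)) atTop (nhds 0) := by
    simpa using (tendsto1 (2*G/(c^2*ε^2)) hβ).add (tendsto2.add tendsto3)
  apply tendsto_of_tendsto_of_tendsto_of_le_of_le' tendsto_const_nhds hlim
  · exact Eventually.of_forall fun n => ENNReal.toReal_nonneg
  filter_upwards [eventually_ge_atTop 1] with n hn
  have hn0 : 0 < n := hn
  have hN : (0:ℝ) < (n:ℝ) := by exact_mod_cast hn
  set t := (n:ℝ) ^ (-(α / 2) : ℝ) * ε with ht_def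
  set M := (n:ℝ) ^ ((7:ℝ)/8) with hM_def
  have hM0 : 0 < M := rpow_pos_of_pos hN _
  have hM1 : 1 ≤ M := by
    calc (1:ℝ) = (1:ℝ) ^ ((7:ℝ)/8) := (Real.one_rpow _).symm
      _ ≤ M := Real.rpow_le_rpow (by norm_num) (by exact_mod_cast hn) (by norm_num)
  have ht : 0 < t := mul_pos (rpow_pos_of_pos hN _) hε
  set a := c^2*t^2*M^2/2 with ha_def
  have ha : 0 < a := by
    apply div_pos _ two_pos
    exact mul_pos (mul_pos hc2 (pow_pos ht 2)) (pow_pos hM0 2)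
  set A := {ω : Ω | a ≤ ∑ i, (Y n i ω - μT)^2} with hA_def
  set B := ⋂ i, V n i ⁻¹' Set.Iic M with hB_def
  set C := ⋂ i, V n i ⁻¹' Set.Ici 0 with hC_def
  -- inclusion
  have hincl : {ω : Ω | |gammaHat n c (V n) (Y n) ω| > t} ⊆ A ∪ (B ∪ C) := by
    intro ω hω
    by_contra hnot
    simp only [hA_def, hB_def, hC_def, Set.mem_union, not_or, Set.mem_iInter,
      Set.mem_setOf_eq, Set.mem_preimage, Set.mem_Iic, Set.mem_Ici,
      not_forall, not_le] at hnot
    obtain ⟨hA, hB, hC⟩ := hnot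
    obtain ⟨i, hi⟩ := hB
    obtain ⟨j, hj⟩ := hC
    have hle := gamma_incl hn0 hc ht hM0 rfl
      (fun k => V n k ω) (fun k => Y n k ω) hA i j hi hj
    simp only [Set.mem_setOf_eq, gammaHat, sampleMean] at hω
    exact absurd hω (not_lt.mpr hle)
  -- measure bound
  have hsum : (P {ω : Ω | |gammaHat n c (V n) (Y n) ω| > t}).toReal
      ≤ (P A).toReal + ((P B).toReal + (P C).toReal) := by
    have h2 : P (A ∪ (B ∪ C)) ≤ P A + (P B + P C) :=
      (measure_union_le _ _).trans (add_le_add_right (measure_union_le _ _) _)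
    have h3 := (measure_mono hincl).trans h2
    have h4 := ENNReal.toReal_mono (by
      exact ENNReal.add_ne_top.mpr ⟨measure_ne_top _ _,
        ENNReal.add_ne_top.mpr ⟨measure_ne_top _ _, measure_ne_top _ _⟩⟩) h3
    rwa [ENNReal.toReal_add (measure_ne_top _ _)
      (ENNReal.add_ne_top.mpr ⟨measure_ne_top _ _, measure_ne_top _ _⟩),
      ENNReal.toReal_add (measure_ne_top _ _) (measure_ne_top _ _)] at h4
  -- bound A
  have hAbound : (P A).toReal ≤ (2*G/(c^2*ε^2)) * (n:ℝ)^(α - 3/4 : ℝ) := by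
    refine (markov_bound P (Y n) (hYmeas n) μT hG ha (hmomP n)).trans_eq ?_
    have e1 : t^2 = (n:ℝ)^(-α:ℝ) * ε^2 := by
      rw [ht_def, mul_pow, ← Real.rpow_natCast ((n:ℝ)^(-(α/2):ℝ)) 2,
        ← Real.rpow_mul hN.le]
      norm_num
    have e2 : M^2 = (n:ℝ)^((7:ℝ)/4) := by
      rw [hM_def, ← Real.rpow_natCast ((n:ℝ)^((7:ℝ)/8)) 2, ← Real.rpow_mul hN.le]
      norm_num
    have e3 : (n:ℝ)^(α - 3/4 : ℝ) * ((n:ℝ)^(-α:ℝ) * (n:ℝ)^((7:ℝ)/4))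
        = (n:ℝ) := by
      rw [← Real.rpow_add hN, ← Real.rpow_add hN,
        show α - 3/4 + (-α + 7/4) = 1 by ring, Real.rpow_one]
    have key : a = (c^2*ε^2/2) * ((n:ℝ)^(-α:ℝ) * (n:ℝ)^((7:ℝ)/4)) := by
      rw [ha_def, e1, e2]; ring
    have hce : 2*G/(c^2*ε^2) * (c^2*ε^2/2) = G := by
      field_simp
    rw [eq_comm, key, eq_div_iff (by rw [← key]; exact ha.ne')]
    calc 2*G/(c^2*ε^2) * (n:ℝ)^(α - 3/4 : ℝ)
          * ((c^2*ε^2/2) * ((n:ℝ)^(-α:ℝ) * (n:ℝ)^((7:ℝ)/4)))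
        = (2*G/(c^2*ε^2) * (c^2*ε^2/2))
          * ((n:ℝ)^(α - 3/4 : ℝ) * ((n:ℝ)^(-α:ℝ) * (n:ℝ)^((7:ℝ)/4))) := by ring
      _ = G * (n:ℝ) := by rw [hce, e3]
      _ = (n:ℝ) * G := by ring
  -- bound B
  have h5piM : (1:ℝ) ≤ 5*π*M := by nlinarith [pi_gt_three]
  have hu1 : 1/(5*π*M) ≤ 1 := by
    rw [div_le_one (by linarith)]
    exact h5piM
  have hBbound : (P B).toReal ≤ Real.exp (-((n:ℝ)/(5*π*(n:ℝ)^((7:ℝ)/8)))) := by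
    have htail : ∀ i, ENNReal.ofReal (1/(5*π*M)) ≤ P ((V n i ⁻¹' Set.Iic M)ᶜ) := by
      intro i
      have hcompl : (V n i ⁻¹' Set.Iic M)ᶜ = V n i ⁻¹' Set.Ioi M := by
        rw [← Set.preimage_compl, Set.compl_Iic]
      rw [hcompl]
      calc ENNReal.ofReal (1/(5*π*M)) ≤ _root_.cauchyMeasure 0 1 (Set.Ioi M) := cauchy_Ioi_lb hM1
        _ = P (V n i ⁻¹' Set.Ioi M) := by
            rw [← hVlaw n i, Measure.map_apply (hVmeas n i) measurableSet_Ioi]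
    have h1 := prod_bound P (V n) (hVmeas n) (hVindep n) (Set.Iic M)
      measurableSet_Iic (by positivity) htail
    refine (h1.trans ?_)
    have hexp : (1 - 1/(5*π*M)) ≤ Real.exp (-(1/(5*π*M))) := by
      linarith [Real.add_one_le_exp (-(1/(5*π*M)))]
    calc (1 - 1/(5*π*M))^n ≤ (Real.exp (-(1/(5*π*M))))^n :=
          pow_le_pow_left₀ (by linarith) hexp n
      _ = Real.exp (-((n:ℝ)/(5*π*(n:ℝ)^((7:ℝ)/8)))) := by
          rw [← Real.exp_nat_mul]
          congr 1
          rw [hM_def] at *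
          ring
  -- bound C
  have hCbound : (P C).toReal ≤ (1 - 1/(2*π))^n := by
    have htail : ∀ i, ENNReal.ofReal (1/(2*π)) ≤ P ((V n i ⁻¹' Set.Ici 0)ᶜ) := by
      intro i
      have hcompl : (V n i ⁻¹' Set.Ici (0:ℝ))ᶜ = V n i ⁻¹' Set.Iio 0 := by
        rw [← Set.preimage_compl, Set.compl_Ici]
      rw [hcompl]
      calc ENNReal.ofReal (1/(2*π)) ≤ _root_.cauchyMeasure 0 1 (Set.Iio 0) := cauchy_Iio_lb
        _ = P (V n i ⁻¹' Set.Iio 0) := by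
            rw [← hVlaw n i, Measure.map_apply (hVmeas n i) measurableSet_Iio]
    exact prod_bound P (V n) (hVmeas n) (hVindep n) (Set.Ici 0)
      measurableSet_Ici (by positivity) htail
  calc (P {ω : Ω | |gammaHat n c (V n) (Y n) ω| > t}).toReal
      ≤ (P A).toReal + ((P B).toReal + (P C).toReal) := hsum
    _ ≤ (2*G/(c^2*ε^2)) * (n:ℝ)^(α - 3/4 : ℝ)
        + (Real.exp (-((n:ℝ)/(5*π*(n:ℝ)^((7:ℝ)/8)))) + (1 - 1/(2*π))^n) := by
        gcongr
end
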